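/- arXiv:1211.6483 — 2 statements merged into one kernel-verified Lean document; each statement's English description precedes it below -/
import Mathlib

section
/- For fixed m₀ and m₁, every face sequence appears in exactly one pair of the matching V, and in every pair (S, S′) of V with S a face sequence of type 1, 3, 5, 7 or 9, S is a codimension-1 face of S′; hence V is a complete matching (a discrete vector field in which every face of J(n,k), together with the empty face, is matched). -/
set_option linter.unusedVariables false

/-- The alphabet `{0, 1, ∗}` for face sequences. -/
inductive Letter : Type
  | zero
  | one
  | star
  deriving DecidableEq

/-- A sequence of length `n` over the alphabet `{0, 1, ∗}`. -/
abbrev FSeq (n : ℕ) := Fin n → Letter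

/-- `S(1)`, the number of `1`'s in `S`. -/
def count1 {n : ℕ} (S : FSeq n) : ℕ := (Finset.univ.filter fun i => S i = Letter.one).card

/-- `S(0)`, the number of `0`'s in `S`. -/
def count0 {n : ℕ} (S : FSeq n) : ℕ := (Finset.univ.filter fun i => S i = Letter.zero).card

/-- The number of `∗`'s in `S`. -/
def countStar {n : ℕ} (S : FSeq n) : ℕ := (Finset.univ.filter fun i => S i = Letter.star).card

/-- A face sequence: either no `∗` and exactly `k` ones, or at most `k-1` ones and
(#ones) + (#stars) ≥ `k+1`. -/
def FaceSeq {n : ℕ} (k : ℕ) (S : FSeq n) : Prop :=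
  (countStar S = 0 ∧ count1 S = k) ∨ (count1 S + 1 ≤ k ∧ k + 1 ≤ count1 S + countStar S)

/-- `v₀`, the sequence of `k` ones followed by `n - k` zeros. -/
def v0seq (n k : ℕ) : FSeq n := fun i => if (i : ℕ) < k then Letter.one else Letter.zero

/-- `S` contains at least one `∗`. -/
def hasStar {n : ℕ} (S : FSeq n) : Prop := ∃ i, S i = Letter.star

/-- There is a `1` to the right of the rightmost `∗` (in particular `S` contains a `∗`). -/
def OneRight {n : ℕ} (S : FSeq n) : Prop :=
  hasStar S ∧ ∃ i, S i = Letter.one ∧ ∀ j, i < j → S j ≠ Letter.star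

/-- There is no `1` to the right of the rightmost `∗` (and `S` contains a `∗`). -/
def NoOneRight {n : ℕ} (S : FSeq n) : Prop :=
  hasStar S ∧ ∀ i, S i = Letter.one → ∃ j, i < j ∧ S j = Letter.star

/-- There is a `0` to the left of the leftmost `∗` (in particular `S` contains a `∗`). -/
def ZeroLeft {n : ℕ} (S : FSeq n) : Prop :=
  hasStar S ∧ ∃ i, S i = Letter.zero ∧ ∀ j, j < i → S j ≠ Letter.star

/-- There is no `0` to the left of the leftmost `∗` (and `S` contains a `∗`). -/
def NoZeroLeft {n : ℕ} (S : FSeq n) : Prop :=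
  hasStar S ∧ ∀ i, S i = Letter.zero → ∃ j, j < i ∧ S j = Letter.star

/-- `i` is the position of the rightmost `1` of `S`. -/
def IsRightmostOne {n : ℕ} (S : FSeq n) (i : Fin n) : Prop :=
  S i = Letter.one ∧ ∀ j, i < j → S j ≠ Letter.one

/-- `i` is the position of the rightmost `∗` of `S`. -/
def IsRightmostStar {n : ℕ} (S : FSeq n) (i : Fin n) : Prop :=
  S i = Letter.star ∧ ∀ j, i < j → S j ≠ Letter.star

/-- `i` is the position of the leftmost `0` of `S`. -/
def IsLeftmostZero {n : ℕ} (S : FSeq n) (i : Fin n) : Prop :=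
  S i = Letter.zero ∧ ∀ j, j < i → S j ≠ Letter.zero

/-- `i` is the position of the leftmost `∗` of `S`. -/
def IsLeftmostStar {n : ℕ} (S : FSeq n) (i : Fin n) : Prop :=
  S i = Letter.star ∧ ∀ j, j < i → S j ≠ Letter.star

/-- Condition of rule (1), subcondition (a). -/
def Cond1a {n : ℕ} (k m0 m1 : ℕ) (S : FSeq n) : Prop :=
  count1 S + 1 ≤ k ∧ OneRight S ∧ count1 S ≠ m1

/-- Condition of rule (1), subcondition (b). -/
def Cond1b {n : ℕ} (k m0 m1 : ℕ) (S : FSeq n) : Prop :=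
  count1 S + 1 ≤ k ∧ OneRight S ∧ count1 S = m1 ∧ m0 < count0 S

/-- Condition of rule (1), subcondition (c): no `0` to the left of the leftmost `∗`. -/
def Cond1c {n : ℕ} (k m0 m1 : ℕ) (S : FSeq n) : Prop :=
  count1 S + 1 ≤ k ∧ OneRight S ∧ count1 S = m1 ∧ count0 S = m0 ∧ NoZeroLeft S

/-- Condition of rule (2), subcondition (a): here `count1 S + 1 ≠ m1` encodes `S(1) ≠ m₁ - 1`. -/
def Cond2a {n : ℕ} (k m0 m1 : ℕ) (S : FSeq n) : Prop :=
  count1 S + 2 ≤ k ∧ NoOneRight S ∧ count1 S + 1 ≠ m1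

/-- Condition of rule (2), subcondition (b). -/
def Cond2b {n : ℕ} (k m0 m1 : ℕ) (S : FSeq n) : Prop :=
  count1 S + 2 ≤ k ∧ NoOneRight S ∧ count1 S + 1 = m1 ∧ m0 < count0 S

/-- Condition of rule (2), subcondition (c). -/
def Cond2c {n : ℕ} (k m0 m1 : ℕ) (S : FSeq n) : Prop :=
  count1 S + 2 ≤ k ∧ NoOneRight S ∧ count1 S + 1 = m1 ∧ count0 S = m0 ∧ NoZeroLeft S

/-- `S` is of type 1 (satisfies the condition of rule (1)). -/
def Type1 {n : ℕ} (k m0 m1 : ℕ) (S : FSeq n) : Prop :=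
  Cond1a k m0 m1 S ∨ Cond1b k m0 m1 S ∨ Cond1c k m0 m1 S

/-- `S` is of type 2 (satisfies the condition of rule (2)). -/
def Type2 {n : ℕ} (k m0 m1 : ℕ) (S : FSeq n) : Prop :=
  Cond2a k m0 m1 S ∨ Cond2b k m0 m1 S ∨ Cond2c k m0 m1 S

/-- `S` is of type 3: `S(1) = k-1`, `S(0) ≤ n-k-1`, no `1` right of the rightmost `∗`,
a `0` left of the leftmost `∗`. -/
def Type3 {n : ℕ} (k : ℕ) (S : FSeq n) : Prop :=
  count1 S + 1 = k ∧ count0 S + k + 1 ≤ n ∧ NoOneRight S ∧ ZeroLeft S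

/-- `S` is of type 4: `S(1) = k-1`, `S(0) ≤ n-k-2`, no `1` right of the rightmost `∗`,
no `0` left of the leftmost `∗`. -/
def Type4 {n : ℕ} (k : ℕ) (S : FSeq n) : Prop :=
  count1 S + 1 = k ∧ count0 S + k + 2 ≤ n ∧ NoOneRight S ∧ NoZeroLeft S

/-- `S` is of type 5: `S(1) = m₁`, `S(0) ≤ m₀`, a `1` right of the rightmost `∗`,
a `0` left of the leftmost `∗`. -/
def Type5 {n : ℕ} (m0 m1 : ℕ) (S : FSeq n) : Prop :=
  count1 S = m1 ∧ count0 S ≤ m0 ∧ OneRight S ∧ ZeroLeft S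

/-- `S` is of type 6: `S(1) = m₁`, `S(0) < m₀`, a `1` right of the rightmost `∗`,
no `0` left of the leftmost `∗`. -/
def Type6 {n : ℕ} (m0 m1 : ℕ) (S : FSeq n) : Prop :=
  count1 S = m1 ∧ count0 S < m0 ∧ OneRight S ∧ NoZeroLeft S

/-- `S` is of type 7: `S(1) = m₁-1`, `S(0) ≤ m₀`, no `1` right of the rightmost `∗`,
a `0` left of the leftmost `∗`. -/
def Type7 {n : ℕ} (m0 m1 : ℕ) (S : FSeq n) : Prop :=
  count1 S + 1 = m1 ∧ count0 S ≤ m0 ∧ NoOneRight S ∧ ZeroLeft S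

/-- `S` is of type 8: `S(1) = m₁-1`, `S(0) < m₀`, no `1` right of the rightmost `∗`,
no `0` left of the leftmost `∗`. -/
def Type8 {n : ℕ} (m0 m1 : ℕ) (S : FSeq n) : Prop :=
  count1 S + 1 = m1 ∧ count0 S < m0 ∧ NoOneRight S ∧ NoZeroLeft S

/-- `S` is of type 9: `S(1) = k`, `S(0) = n-k`, and `S ≠ v₀`. -/
def Type9 {n : ℕ} (k : ℕ) (S : FSeq n) : Prop :=
  count1 S = k ∧ count0 S + k = n ∧ S ≠ v0seq n k

/-- `S` is of type 10: `S(1) = k-1`, `S(0) = n-k-1`, no `1` right of the rightmost `∗`,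
no `0` left of the leftmost `∗`. -/
def Type10 {n : ℕ} (k : ℕ) (S : FSeq n) : Prop :=
  count1 S + 1 = k ∧ count0 S + k + 1 = n ∧ NoOneRight S ∧ NoZeroLeft S

/-- `S` is of type `i` for `1 ≤ i ≤ 10` (and of no type otherwise). -/
def OfType {n : ℕ} (k m0 m1 : ℕ) (i : ℕ) (S : FSeq n) : Prop :=
  match i with
  | 1 => Type1 k m0 m1 S
  | 2 => Type2 k m0 m1 S
  | 3 => Type3 k S
  | 4 => Type4 k S
  | 5 => Type5 m0 m1 S
  | 6 => Type6 m0 m1 S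
  | 7 => Type7 m0 m1 S
  | 8 => Type8 m0 m1 S
  | 9 => Type9 k S
  | 10 => Type10 k S
  | _ => False

/-- The replacement of rule (1): replace the rightmost `1` with `∗`. -/
def Apply1 {n : ℕ} (S S' : FSeq n) : Prop :=
  ∃ i, IsRightmostOne S i ∧ S' = Function.update S i Letter.star

/-- The replacement of rule (2): replace the rightmost `∗` with `1`. -/
def Apply2 {n : ℕ} (S S' : FSeq n) : Prop :=
  ∃ i, IsRightmostStar S i ∧ S' = Function.update S i Letter.one

/-- The replacement of rules (3), (5) and (7): replace the leftmost `0` with `∗`. -/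
def Apply3 {n : ℕ} (S S' : FSeq n) : Prop :=
  ∃ i, IsLeftmostZero S i ∧ S' = Function.update S i Letter.star

/-- The replacement of rules (4), (6) and (8): replace the leftmost `∗` with `0`. -/
def Apply4 {n : ℕ} (S S' : FSeq n) : Prop :=
  ∃ i, IsLeftmostStar S i ∧ S' = Function.update S i Letter.zero

/-- The replacement of rule (9): replace the leftmost `0` and the rightmost `1` each with `∗`. -/
def Apply9 {n : ℕ} (S S' : FSeq n) : Prop :=
  ∃ i j, IsLeftmostZero S i ∧ IsRightmostOne S j ∧
    S' = Function.update (Function.update S i Letter.star) j Letter.star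

/-- The replacement of rule (10): replace the leftmost `∗` with `0` and the other `∗` with `1`. -/
def Apply10 {n : ℕ} (S S' : FSeq n) : Prop :=
  ∃ i j, IsLeftmostStar S i ∧ IsRightmostStar S j ∧ i ≠ j ∧
    S' = Function.update (Function.update S i Letter.zero) j Letter.one

/-- The matching `V` on face sequences: a face sequence `S` of type 1, 3, 5, 7 or 9 is
matched with the result `S'` of applying the corresponding rule to it. -/
def Vmatch {n : ℕ} (k m0 m1 : ℕ) (S S' : FSeq n) : Prop :=
  FaceSeq k S ∧
    ((Type1 k m0 m1 S ∧ Apply1 S S') ∨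
     (Type3 k S ∧ Apply3 S S') ∨
     (Type5 m0 m1 S ∧ Apply3 S S') ∨
     (Type7 m0 m1 S ∧ Apply3 S S') ∨
     (Type9 k S ∧ Apply9 S S'))

/-- The vertex set of a face sequence `S`: the vertex sequences (0/1-sequences with
exactly `k` ones) agreeing with `S` wherever `S` is not `∗`. -/
def VertexSet {n : ℕ} (k : ℕ) (S : FSeq n) : Set (FSeq n) :=
  {v | (∀ i, v i ≠ Letter.star) ∧ count1 v = k ∧ ∀ i, S i ≠ Letter.star → v i = S i}

/-- The dimension of the face `F(S)`. -/
def fdim {n : ℕ} (S : FSeq n) : ℕ :=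
  if countStar S = 0 then 0 else countStar S - 1

/-- `T` is a codimension-1 face of `S`. -/
def Codim1 {n : ℕ} (k : ℕ) (T S : FSeq n) : Prop :=
  VertexSet k T ⊂ VertexSet k S ∧ fdim T + 1 = fdim S

/-- A (nontrivial) `V`-path `a₀, b₀, a₁, b₁, …, b_r, a_{r+1}` of face sequences. -/
structure VPath (n k m0 m1 r : ℕ) where
  a : Fin (r + 2) → FSeq n
  b : Fin (r + 1) → FSeq n
  face_a : ∀ i, FaceSeq k (a i)
  face_b : ∀ i, FaceSeq k (b i)
  mem : ∀ i : Fin (r + 1), Vmatch k m0 m1 (a i.castSucc) (b i)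
  codim_left : ∀ i : Fin (r + 1), Codim1 k (a i.castSucc) (b i)
  codim_right : ∀ i : Fin (r + 1), Codim1 k (a i.succ) (b i)
  step_ne : ∀ i : Fin (r + 1), a i.castSucc ≠ a i.succ

/-- The matching `V` extended to the poset of cells including the empty face `none`:
the empty face is matched with `v₀`, and otherwise pairs are given by `Vmatch`. -/
def VmatchE (n k m0 m1 : ℕ) : Option (FSeq n) → Option (FSeq n) → Prop
  | none, some S' => S' = v0seq n k
  | some S, some S' => Vmatch k m0 m1 S S'
  | _, _ => False

noncomputable section AuxMatching
open Classical

set_option linter.unreachableTactic false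
set_option linter.unusedTactic false

namespace AuxM

variable {n : ℕ}

/-- generic letter count -/
def countL (a : Letter) (S : FSeq n) : ℕ := (Finset.univ.filter fun i => S i = a).card

lemma count0_eq (S : FSeq n) : count0 S = countL Letter.zero S := rfl
lemma count1_eq (S : FSeq n) : count1 S = countL Letter.one S := rfl
lemma countStar_eq (S : FSeq n) : countStar S = countL Letter.star S := rfl

lemma countL_pos {a : Letter} {S : FSeq n} {i : Fin n} (h : S i = a) : 0 < countL a S :=
  Finset.card_pos.2 ⟨i, by simp [countL, h]⟩

lemma exists_of_countL {a : Letter} {S : FSeq n} (h : countL a S ≠ 0) : ∃ i, S i = a := by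
  obtain ⟨i, hi⟩ := Finset.card_pos.1 (Nat.pos_of_ne_zero h)
  exact ⟨i, by simpa [countL] using hi⟩

lemma filter_update (S : FSeq n) (i : Fin n) (c a : Letter) :
    (Finset.univ.filter fun j => Function.update S i c j = a) =
      if c = a then insert i ((Finset.univ.filter fun j => S j = a).erase i)
      else (Finset.univ.filter fun j => S j = a).erase i := by
  ext j
  by_cases hj : j = i
  · subst hj
    by_cases hc : c = a <;> simp [Function.update_self, hc]
  · by_cases hc : c = a <;>
      simp [Function.update_of_ne hj, hc, hj]

lemma countL_update_new {S : FSeq n} {i : Fin n} {c : Letter} (h : S i ≠ c) :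
    countL c (Function.update S i c) = countL c S + 1 := by
  rw [countL, filter_update, if_pos rfl, Finset.card_insert_of_notMem (by simp)]
  rw [Finset.erase_eq_of_notMem (by simp [h])]
  rfl

lemma countL_update_old {S : FSeq n} {i : Fin n} {c : Letter} (h : S i ≠ c) :
    countL (S i) (Function.update S i c) + 1 = countL (S i) S := by
  rw [countL, filter_update, if_neg (by exact fun hc => h hc.symm)]
  rw [Finset.card_erase_of_mem (by simp)]
  have : 0 < countL (S i) S := countL_pos rfl
  unfold countL at this ⊢
  omega

lemma countL_update_other {S : FSeq n} {i : Fin n} {c a : Letter} (h1 : S i ≠ a) (h2 : c ≠ a) :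
    countL a (Function.update S i c) = countL a S := by
  rw [countL, filter_update, if_neg h2, Finset.erase_eq_of_notMem (by simp [h1])]
  rfl

lemma letter_cases (a : Letter) : a = Letter.zero ∨ a = Letter.one ∨ a = Letter.star := by
  cases a <;> simp

lemma count_total (S : FSeq n) : count0 S + count1 S + countStar S = n := by
  classical
  rw [count0_eq, count1_eq, countStar_eq]
  unfold countL
  rw [← Finset.card_union_of_disjoint, ← Finset.card_union_of_disjoint]
  · have : ((Finset.univ.filter fun i => S i = Letter.zero) ∪
        (Finset.univ.filter fun i => S i = Letter.one)) ∪
        (Finset.univ.filter fun i => S i = Letter.star) = Finset.univ := by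
      ext j
      simp only [Finset.mem_union, Finset.mem_filter, Finset.mem_univ, true_and, iff_true]
      rcases letter_cases (S j) with h | h | h <;> simp [h]
    rw [this, Finset.card_univ, Fintype.card_fin]
  · rw [Finset.disjoint_left]
    intro j hj
    simp only [Finset.mem_union, Finset.mem_filter, Finset.mem_univ, true_and] at hj ⊢
    rcases hj with h | h <;> simp [h]
  · rw [Finset.disjoint_left]
    intro j hj
    simp only [Finset.mem_filter, Finset.mem_univ, true_and] at hj ⊢
    simp [hj]


lemma exists_rightmost {p : Fin n → Prop} (h : ∃ i, p i) :
    ∃ i, p i ∧ ∀ j, i < j → ¬ p j := by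
  classical
  obtain ⟨i, hi⟩ := h
  have hne : (Finset.univ.filter fun j => p j).Nonempty := ⟨i, by simp [hi]⟩
  refine ⟨Finset.max' _ hne, ?_, ?_⟩
  · have := Finset.max'_mem _ hne
    simpa using this
  · intro j hj hpj
    exact absurd (Finset.le_max' _ j (Finset.mem_filter.2 ⟨Finset.mem_univ _, hpj⟩)) (not_le.2 hj)

lemma exists_leftmost {p : Fin n → Prop} (h : ∃ i, p i) :
    ∃ i, p i ∧ ∀ j, j < i → ¬ p j := by
  classical
  obtain ⟨i, hi⟩ := h
  have hne : (Finset.univ.filter fun j => p j).Nonempty := ⟨i, by simp [hi]⟩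
  refine ⟨Finset.min' _ hne, ?_, ?_⟩
  · have := Finset.min'_mem _ hne
    simpa using this
  · intro j hj hpj
    exact absurd (Finset.min'_le _ j (Finset.mem_filter.2 ⟨Finset.mem_univ _, hpj⟩)) (not_le.2 hj)

lemma rightmost_unique {p : Fin n → Prop} {i i' : Fin n}
    (h : p i ∧ ∀ j, i < j → ¬ p j) (h' : p i' ∧ ∀ j, i' < j → ¬ p j) : i = i' := by
  rcases lt_trichotomy i i' with hlt | he | hlt
  · exact absurd h'.1 (h.2 _ hlt)
  · exact he
  · exact absurd h.1 (h'.2 _ hlt)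

lemma leftmost_unique {p : Fin n → Prop} {i i' : Fin n}
    (h : p i ∧ ∀ j, j < i → ¬ p j) (h' : p i' ∧ ∀ j, j < i' → ¬ p j) : i = i' := by
  rcases lt_trichotomy i i' with hlt | he | hlt
  · exact absurd h.1 (h'.2 _ hlt)
  · exact he
  · exact absurd h'.1 (h.2 _ hlt)

lemma hasStar_of_count {S : FSeq n} (h : countStar S ≠ 0) : hasStar S :=
  exists_of_countL (a := Letter.star) (by rwa [← countStar_eq])

lemma count_of_hasStar {S : FSeq n} (h : hasStar S) : countStar S ≠ 0 := by
  obtain ⟨i, hi⟩ := h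
  rw [countStar_eq]
  exact (countL_pos hi).ne'

lemma oneRight_or {S : FSeq n} (h : hasStar S) : OneRight S ∨ NoOneRight S := by
  by_cases ho : ∃ i, S i = Letter.one ∧ ∀ j, i < j → S j ≠ Letter.star
  · exact Or.inl ⟨h, ho⟩
  · push_neg at ho
    refine Or.inr ⟨h, fun i hi => ?_⟩
    obtain ⟨j, hj, hjs⟩ := ho i hi
    exact ⟨j, hj, hjs⟩

lemma not_oneRight_noOneRight {S : FSeq n} (h1 : OneRight S) (h2 : NoOneRight S) : False := by
  obtain ⟨-, i, hi, hr⟩ := h1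
  obtain ⟨j, hj, hjs⟩ := h2.2 i hi
  exact hr j hj hjs

lemma zeroLeft_or {S : FSeq n} (h : hasStar S) : ZeroLeft S ∨ NoZeroLeft S := by
  by_cases ho : ∃ i, S i = Letter.zero ∧ ∀ j, j < i → S j ≠ Letter.star
  · exact Or.inl ⟨h, ho⟩
  · push_neg at ho
    refine Or.inr ⟨h, fun i hi => ?_⟩
    obtain ⟨j, hj, hjs⟩ := ho i hi
    exact ⟨j, hj, hjs⟩

lemma not_zeroLeft_noZeroLeft {S : FSeq n} (h1 : ZeroLeft S) (h2 : NoZeroLeft S) : False := by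
  obtain ⟨-, i, hi, hr⟩ := h1
  obtain ⟨j, hj, hjs⟩ := h2.2 i hi
  exact hr j hj hjs


lemma counts_to_star {S : FSeq n} {i : Fin n} (hi : S i ≠ Letter.star) :
    countStar (Function.update S i Letter.star) = countStar S + 1 := by
  rw [countStar_eq, countStar_eq]; exact countL_update_new hi

lemma counts_one_star_1 {S : FSeq n} {i : Fin n} (hi : S i = Letter.one) :
    count1 (Function.update S i Letter.star) + 1 = count1 S := by
  have h := countL_update_old (S := S) (i := i) (c := Letter.star) (by simp [hi])
  rw [hi] at h; exact h

lemma counts_one_star_0 {S : FSeq n} {i : Fin n} (hi : S i = Letter.one) :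
    count0 (Function.update S i Letter.star) = count0 S :=
  countL_update_other (by simp [hi]) (by simp)

lemma counts_zero_star_0 {S : FSeq n} {i : Fin n} (hi : S i = Letter.zero) :
    count0 (Function.update S i Letter.star) + 1 = count0 S := by
  have h := countL_update_old (S := S) (i := i) (c := Letter.star) (by simp [hi])
  rw [hi] at h; exact h

lemma counts_zero_star_1 {S : FSeq n} {i : Fin n} (hi : S i = Letter.zero) :
    count1 (Function.update S i Letter.star) = count1 S :=
  countL_update_other (by simp [hi]) (by simp)

lemma counts_star_one_1 {S : FSeq n} {i : Fin n} (hi : S i = Letter.star) :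
    count1 (Function.update S i Letter.one) = count1 S + 1 :=
  countL_update_new (by simp [hi])

lemma counts_star_one_0 {S : FSeq n} {i : Fin n} (hi : S i = Letter.star) :
    count0 (Function.update S i Letter.one) = count0 S :=
  countL_update_other (by simp [hi]) (by simp)

lemma counts_star_one_s {S : FSeq n} {i : Fin n} (hi : S i = Letter.star) :
    countStar (Function.update S i Letter.one) + 1 = countStar S := by
  have h := countL_update_old (S := S) (i := i) (c := Letter.one) (by simp [hi])
  rw [hi] at h; exact h

lemma counts_star_zero_0 {S : FSeq n} {i : Fin n} (hi : S i = Letter.star) :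
    count0 (Function.update S i Letter.zero) = count0 S + 1 :=
  countL_update_new (by simp [hi])

lemma counts_star_zero_1 {S : FSeq n} {i : Fin n} (hi : S i = Letter.star) :
    count1 (Function.update S i Letter.zero) = count1 S :=
  countL_update_other (by simp [hi]) (by simp)

lemma counts_star_zero_s {S : FSeq n} {i : Fin n} (hi : S i = Letter.star) :
    countStar (Function.update S i Letter.zero) + 1 = countStar S := by
  have h := countL_update_old (S := S) (i := i) (c := Letter.zero) (by simp [hi])
  rw [hi] at h; exact h

lemma counts_zero_one_1 {S : FSeq n} {i : Fin n} (hi : S i = Letter.zero) :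
    count1 (Function.update S i Letter.one) = count1 S + 1 :=
  countL_update_new (by simp [hi])

lemma counts_zero_one_0 {S : FSeq n} {i : Fin n} (hi : S i = Letter.zero) :
    count0 (Function.update S i Letter.one) + 1 = count0 S := by
  have h := countL_update_old (S := S) (i := i) (c := Letter.one) (by simp [hi])
  rw [hi] at h; exact h

lemma counts_zero_one_s {S : FSeq n} {i : Fin n} (hi : S i = Letter.zero) :
    countStar (Function.update S i Letter.one) = countStar S :=
  countL_update_other (by simp [hi]) (by simp)

lemma counts_one_zero_0 {S : FSeq n} {i : Fin n} (hi : S i = Letter.one) :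
    count0 (Function.update S i Letter.zero) = count0 S + 1 :=
  countL_update_new (by simp [hi])

lemma counts_one_zero_1 {S : FSeq n} {i : Fin n} (hi : S i = Letter.one) :
    count1 (Function.update S i Letter.zero) + 1 = count1 S := by
  have h := countL_update_old (S := S) (i := i) (c := Letter.zero) (by simp [hi])
  rw [hi] at h; exact h

lemma counts_one_zero_s {S : FSeq n} {i : Fin n} (hi : S i = Letter.one) :
    countStar (Function.update S i Letter.zero) = countStar S :=
  countL_update_other (by simp [hi]) (by simp)


def typeOf (k m0 m1 : ℕ) (S : FSeq n) : ℕ :=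
  if countStar S = 0 then 9
  else if OneRight S then
    if count1 S ≠ m1 then 1
    else if m0 < count0 S then 1
    else if count0 S = m0 then (if NoZeroLeft S then 1 else 5)
    else if ZeroLeft S then 5 else 6
  else
    if count1 S + 1 = k then
      (if ZeroLeft S then 3 else if count0 S + k + 2 ≤ n then 4 else 10)
    else
      if count1 S + 1 ≠ m1 then 2
      else if m0 < count0 S then 2
      else if count0 S = m0 then (if NoZeroLeft S then 2 else 7)
      else if ZeroLeft S then 7 else 8

set_option maxHeartbeats 2000000 in
lemma typeOf_eq {k m0 m1 : ℕ} {S : FSeq n} (hm1u : m1 + 1 ≤ k) :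
    ∀ i, OfType k m0 m1 i S → typeOf k m0 m1 S = i := by
  have htot := count_total S
  have tON : ∀ (_ : OneRight S) (_ : NoOneRight S), False := not_oneRight_noOneRight
  have tZN : ∀ (_ : ZeroLeft S) (_ : NoZeroLeft S), False := not_zeroLeft_noZeroLeft
  intro i h
  match i with
  | 0 => exact h.elim
  | 1 =>
    rcases h with ⟨hk, hO, hc⟩ | ⟨hk, hO, hc, hc0⟩ | ⟨hk, hO, hc, hc0, hNZ⟩ <;>
    · have hcs : ¬ countStar S = 0 := count_of_hasStar hO.1
      unfold typeOf
      split_ifs <;>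
      first
        | rfl
        | omega
        | (exfalso; exact tON ‹OneRight S› ‹NoOneRight S›)
        | (exfalso; exact tZN ‹ZeroLeft S› ‹NoZeroLeft S›)
        | (exfalso; exact ‹¬ OneRight S› ‹OneRight S›)
        | (exfalso; exact ‹¬ NoOneRight S› ‹NoOneRight S›)
        | (exfalso; exact ‹¬ ZeroLeft S› ‹ZeroLeft S›)
        | (exfalso; exact ‹¬ NoZeroLeft S› ‹NoZeroLeft S›)
  | 2 =>
    rcases h with ⟨hk, hN, hc⟩ | ⟨hk, hN, hc, hc0⟩ | ⟨hk, hN, hc, hc0, hNZ⟩ <;>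
    · have hcs : ¬ countStar S = 0 := count_of_hasStar hN.1
      unfold typeOf
      split_ifs <;>
      first
        | rfl
        | omega
        | (exfalso; exact tON ‹OneRight S› ‹NoOneRight S›)
        | (exfalso; exact tZN ‹ZeroLeft S› ‹NoZeroLeft S›)
        | (exfalso; exact ‹¬ OneRight S› ‹OneRight S›)
        | (exfalso; exact ‹¬ NoOneRight S› ‹NoOneRight S›)
        | (exfalso; exact ‹¬ ZeroLeft S› ‹ZeroLeft S›)
        | (exfalso; exact ‹¬ NoZeroLeft S› ‹NoZeroLeft S›)
  | 3 =>
    obtain ⟨h1, h2, hN, hZ⟩ := h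
    have hcs : ¬ countStar S = 0 := count_of_hasStar hN.1
    unfold typeOf
    split_ifs <;>
      first
        | rfl
        | omega
        | (exfalso; exact tON ‹OneRight S› ‹NoOneRight S›)
        | (exfalso; exact tZN ‹ZeroLeft S› ‹NoZeroLeft S›)
        | (exfalso; exact ‹¬ OneRight S› ‹OneRight S›)
        | (exfalso; exact ‹¬ NoOneRight S› ‹NoOneRight S›)
        | (exfalso; exact ‹¬ ZeroLeft S› ‹ZeroLeft S›)
        | (exfalso; exact ‹¬ NoZeroLeft S› ‹NoZeroLeft S›)
  | 4 =>
    obtain ⟨h1, h2, hN, hNZ⟩ := h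
    have hcs : ¬ countStar S = 0 := count_of_hasStar hN.1
    unfold typeOf
    split_ifs <;>
      first
        | rfl
        | omega
        | (exfalso; exact tON ‹OneRight S› ‹NoOneRight S›)
        | (exfalso; exact tZN ‹ZeroLeft S› ‹NoZeroLeft S›)
        | (exfalso; exact ‹¬ OneRight S› ‹OneRight S›)
        | (exfalso; exact ‹¬ NoOneRight S› ‹NoOneRight S›)
        | (exfalso; exact ‹¬ ZeroLeft S› ‹ZeroLeft S›)
        | (exfalso; exact ‹¬ NoZeroLeft S› ‹NoZeroLeft S›)
  | 5 =>
    obtain ⟨h1, h2, hO, hZ⟩ := h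
    have hcs : ¬ countStar S = 0 := count_of_hasStar hO.1
    unfold typeOf
    split_ifs <;>
      first
        | rfl
        | omega
        | (exfalso; exact tON ‹OneRight S› ‹NoOneRight S›)
        | (exfalso; exact tZN ‹ZeroLeft S› ‹NoZeroLeft S›)
        | (exfalso; exact ‹¬ OneRight S› ‹OneRight S›)
        | (exfalso; exact ‹¬ NoOneRight S› ‹NoOneRight S›)
        | (exfalso; exact ‹¬ ZeroLeft S› ‹ZeroLeft S›)
        | (exfalso; exact ‹¬ NoZeroLeft S› ‹NoZeroLeft S›)
  | 6 =>
    obtain ⟨h1, h2, hO, hNZ⟩ := h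
    have hcs : ¬ countStar S = 0 := count_of_hasStar hO.1
    unfold typeOf
    split_ifs <;>
      first
        | rfl
        | omega
        | (exfalso; exact tON ‹OneRight S› ‹NoOneRight S›)
        | (exfalso; exact tZN ‹ZeroLeft S› ‹NoZeroLeft S›)
        | (exfalso; exact ‹¬ OneRight S› ‹OneRight S›)
        | (exfalso; exact ‹¬ NoOneRight S› ‹NoOneRight S›)
        | (exfalso; exact ‹¬ ZeroLeft S› ‹ZeroLeft S›)
        | (exfalso; exact ‹¬ NoZeroLeft S› ‹NoZeroLeft S›)
  | 7 =>
    obtain ⟨h1, h2, hN, hZ⟩ := h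
    have hcs : ¬ countStar S = 0 := count_of_hasStar hN.1
    unfold typeOf
    split_ifs <;>
      first
        | rfl
        | omega
        | (exfalso; exact tON ‹OneRight S› ‹NoOneRight S›)
        | (exfalso; exact tZN ‹ZeroLeft S› ‹NoZeroLeft S›)
        | (exfalso; exact ‹¬ OneRight S› ‹OneRight S›)
        | (exfalso; exact ‹¬ NoOneRight S› ‹NoOneRight S›)
        | (exfalso; exact ‹¬ ZeroLeft S› ‹ZeroLeft S›)
        | (exfalso; exact ‹¬ NoZeroLeft S› ‹NoZeroLeft S›)
  | 8 =>
    obtain ⟨h1, h2, hN, hNZ⟩ := h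
    have hcs : ¬ countStar S = 0 := count_of_hasStar hN.1
    unfold typeOf
    split_ifs <;>
      first
        | rfl
        | omega
        | (exfalso; exact tON ‹OneRight S› ‹NoOneRight S›)
        | (exfalso; exact tZN ‹ZeroLeft S› ‹NoZeroLeft S›)
        | (exfalso; exact ‹¬ OneRight S› ‹OneRight S›)
        | (exfalso; exact ‹¬ NoOneRight S› ‹NoOneRight S›)
        | (exfalso; exact ‹¬ ZeroLeft S› ‹ZeroLeft S›)
        | (exfalso; exact ‹¬ NoZeroLeft S› ‹NoZeroLeft S›)
  | 9 =>
    obtain ⟨h1, h2, h3⟩ := h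
    have hcs : countStar S = 0 := by omega
    unfold typeOf
    rw [if_pos hcs]
  | 10 =>
    obtain ⟨h1, h2, hN, hNZ⟩ := h
    have hcs : ¬ countStar S = 0 := count_of_hasStar hN.1
    unfold typeOf
    split_ifs <;>
      first
        | rfl
        | omega
        | (exfalso; exact tON ‹OneRight S› ‹NoOneRight S›)
        | (exfalso; exact tZN ‹ZeroLeft S› ‹NoZeroLeft S›)
        | (exfalso; exact ‹¬ OneRight S› ‹OneRight S›)
        | (exfalso; exact ‹¬ NoOneRight S› ‹NoOneRight S›)
        | (exfalso; exact ‹¬ ZeroLeft S› ‹ZeroLeft S›)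
        | (exfalso; exact ‹¬ NoZeroLeft S› ‹NoZeroLeft S›)
  | (m + 11) => exact h.elim

lemma type_excl {k m0 m1 i j : ℕ} {S : FSeq n} (hm1u : m1 + 1 ≤ k)
    (hi : OfType k m0 m1 i S) (hj : OfType k m0 m1 j S) : i = j := by
  rw [← typeOf_eq hm1u i hi, typeOf_eq hm1u j hj]

lemma classify {k m0 m1 : ℕ} {S : FSeq n} (hm1u : m1 + 1 ≤ k)
    (hF : FaceSeq k S) (hne : S ≠ v0seq n k) :
    OfType k m0 m1 (typeOf k m0 m1 S) S := by
  have htot := count_total S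
  by_cases hcs : countStar S = 0
  · rcases hF with ⟨h1, h2⟩ | ⟨h1, h2⟩
    · unfold typeOf; rw [if_pos hcs]
      exact ⟨h2, by omega, hne⟩
    · omega
  · have hstar : hasStar S := hasStar_of_count hcs
    have hface : count1 S + 1 ≤ k ∧ k + 1 ≤ count1 S + countStar S := by
      rcases hF with ⟨h1, h2⟩ | h
      · exact absurd h1 hcs
      · exact h
    unfold typeOf
    rw [if_neg hcs]
    rcases oneRight_or hstar with hO | hN
    · rw [if_pos hO]
      by_cases h1 : count1 S ≠ m1
      · rw [if_pos h1]; exact Or.inl ⟨hface.1, hO, h1⟩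
      · push_neg at h1
        rw [if_neg (fun hc => hc h1)]
        by_cases h2 : m0 < count0 S
        · rw [if_pos h2]; exact Or.inr (Or.inl ⟨hface.1, hO, h1, h2⟩)
        · rw [if_neg h2]
          by_cases h3 : count0 S = m0
          · rw [if_pos h3]
            rcases zeroLeft_or hstar with hZ | hNZ
            · rw [if_neg (fun hNZ => not_zeroLeft_noZeroLeft hZ hNZ)]
              exact ⟨h1, le_of_eq h3, hO, hZ⟩
            · rw [if_pos hNZ]; exact Or.inr (Or.inr ⟨hface.1, hO, h1, h3, hNZ⟩)
          · rw [if_neg h3]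
            have h4 : count0 S < m0 := by omega
            rcases zeroLeft_or hstar with hZ | hNZ
            · rw [if_pos hZ]; exact ⟨h1, le_of_lt h4, hO, hZ⟩
            · rw [if_neg (fun hZ => not_zeroLeft_noZeroLeft hZ hNZ)]
              exact ⟨h1, h4, hO, hNZ⟩
    · rw [if_neg (fun hO => not_oneRight_noOneRight hO hN)]
      by_cases hk' : count1 S + 1 = k
      · rw [if_pos hk']
        rcases zeroLeft_or hstar with hZ | hNZ
        · rw [if_pos hZ]; exact ⟨hk', by omega, hN, hZ⟩
        · rw [if_neg (fun hZ => not_zeroLeft_noZeroLeft hZ hNZ)]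
          by_cases h4 : count0 S + k + 2 ≤ n
          · rw [if_pos h4]; exact ⟨hk', h4, hN, hNZ⟩
          · rw [if_neg h4]; exact ⟨hk', by omega, hN, hNZ⟩
      · rw [if_neg hk']
        have hk2 : count1 S + 2 ≤ k := by omega
        by_cases h1 : count1 S + 1 ≠ m1
        · rw [if_pos h1]; exact Or.inl ⟨hk2, hN, h1⟩
        · push_neg at h1
          rw [if_neg (fun hc => hc h1)]
          by_cases h2 : m0 < count0 S
          · rw [if_pos h2]; exact Or.inr (Or.inl ⟨hk2, hN, h1, h2⟩)
          · rw [if_neg h2]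
            by_cases h3 : count0 S = m0
            · rw [if_pos h3]
              rcases zeroLeft_or hstar with hZ | hNZ
              · rw [if_neg (fun hNZ => not_zeroLeft_noZeroLeft hZ hNZ)]
                exact ⟨h1, le_of_eq h3, hN, hZ⟩
              · rw [if_pos hNZ]; exact Or.inr (Or.inr ⟨hk2, hN, h1, h3, hNZ⟩)
            · rw [if_neg h3]
              have h4 : count0 S < m0 := by omega
              rcases zeroLeft_or hstar with hZ | hNZ
              · rw [if_pos hZ]; exact ⟨h1, le_of_lt h4, hN, hZ⟩
              · rw [if_neg (fun hZ => not_zeroLeft_noZeroLeft hZ hNZ)]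
                exact ⟨h1, h4, hN, hNZ⟩


lemma v0_no_star {k : ℕ} (i : Fin n) : v0seq n k i ≠ Letter.star := by
  unfold v0seq; split_ifs <;> simp

lemma hasStar_ne_v0 {k : ℕ} {S : FSeq n} (h : hasStar S) : S ≠ v0seq n k := by
  obtain ⟨i, hi⟩ := h
  intro he
  rw [he] at hi
  exact v0_no_star i hi

lemma apply1_det {S a b : FSeq n} (ha : Apply1 S a) (hb : Apply1 S b) : a = b := by
  obtain ⟨i, hi, rfl⟩ := ha; obtain ⟨j, hj, rfl⟩ := hb
  rw [rightmost_unique (p := fun p => S p = Letter.one) hi hj]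

lemma apply2_det {S a b : FSeq n} (ha : Apply2 S a) (hb : Apply2 S b) : a = b := by
  obtain ⟨i, hi, rfl⟩ := ha; obtain ⟨j, hj, rfl⟩ := hb
  rw [rightmost_unique (p := fun p => S p = Letter.star) hi hj]

lemma apply3_det {S a b : FSeq n} (ha : Apply3 S a) (hb : Apply3 S b) : a = b := by
  obtain ⟨i, hi, rfl⟩ := ha; obtain ⟨j, hj, rfl⟩ := hb
  rw [leftmost_unique (p := fun p => S p = Letter.zero) hi hj]

lemma apply4_det {S a b : FSeq n} (ha : Apply4 S a) (hb : Apply4 S b) : a = b := by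
  obtain ⟨i, hi, rfl⟩ := ha; obtain ⟨j, hj, rfl⟩ := hb
  rw [leftmost_unique (p := fun p => S p = Letter.star) hi hj]

lemma apply9_det {S a b : FSeq n} (ha : Apply9 S a) (hb : Apply9 S b) : a = b := by
  obtain ⟨i, j, hi, hj, rfl⟩ := ha; obtain ⟨i', j', hi', hj', rfl⟩ := hb
  rw [leftmost_unique (p := fun p => S p = Letter.zero) hi hi',
    rightmost_unique (p := fun p => S p = Letter.one) hj hj']

lemma apply10_det {S a b : FSeq n} (ha : Apply10 S a) (hb : Apply10 S b) : a = b := by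
  obtain ⟨i, j, hi, hj, hij, rfl⟩ := ha; obtain ⟨i', j', hi', hj', hij', rfl⟩ := hb
  rw [leftmost_unique (p := fun p => S p = Letter.star) hi hi',
    rightmost_unique (p := fun p => S p = Letter.star) hj hj']

lemma stars_lt_of_oneRight {S : FSeq n} (hO : OneRight S) {i : Fin n}
    (hi : IsRightmostOne S i) : ∀ j, S j = Letter.star → j < i := by
  obtain ⟨-, p, hp1, hps⟩ := hO
  intro j hj
  have hjp : j ≤ p := by
    by_contra h
    exact hps j (lt_of_not_ge h) hj
  have hpi : p ≤ i := by
    by_contra h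
    exact hi.2 p (lt_of_not_ge h) hp1
  have : j ≠ i := fun he => by rw [he, hi.1] at hj; exact Letter.noConfusion hj
  exact lt_of_le_of_ne (le_trans hjp hpi) this

lemma stars_gt_of_zeroLeft {S : FSeq n} (hZ : ZeroLeft S) {i : Fin n}
    (hi : IsLeftmostZero S i) : ∀ j, S j = Letter.star → i < j := by
  obtain ⟨-, p, hp0, hps⟩ := hZ
  intro j hj
  have hjp : p ≤ j := by
    by_contra h
    exact hps j (lt_of_not_ge h) hj
  have hpi : i ≤ p := by
    by_contra h
    exact hi.2 p (lt_of_not_ge h) hp0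
  have : i ≠ j := fun he => by rw [← he, hi.1] at hj; exact Letter.noConfusion hj
  exact lt_of_le_of_ne (le_trans hpi hjp) this

lemma exists_rightmostOne {S : FSeq n} (h : ∃ i, S i = Letter.one) :
    ∃ i, IsRightmostOne S i := exists_rightmost h

lemma exists_leftmostZero {S : FSeq n} (h : ∃ i, S i = Letter.zero) :
    ∃ i, IsLeftmostZero S i := exists_leftmost h

lemma exists_rightmostStar {S : FSeq n} (h : hasStar S) :
    ∃ i, IsRightmostStar S i := exists_rightmost h

lemma exists_leftmostStar {S : FSeq n} (h : hasStar S) :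
    ∃ i, IsLeftmostStar S i := exists_leftmost h

lemma second_star {S : FSeq n} (h2 : 2 ≤ countStar S) {l : Fin n} (hl : S l = Letter.star) :
    ∃ s, S s = Letter.star ∧ s ≠ l := by
  by_contra h
  push_neg at h
  have hsub : (Finset.univ.filter fun p => S p = Letter.star) ⊆ {l} := by
    intro x hx
    simp only [Finset.mem_filter] at hx
    simp [h x hx.2]
  have := Finset.card_le_card hsub
  rw [Finset.card_singleton] at this
  rw [countStar_eq] at h2
  unfold countL at h2
  omega

lemma star_mem_pair {S : FSeq n} (hcs : countStar S = 2) {l r : Fin n}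
    (hl : S l = Letter.star) (hr : S r = Letter.star) (hlr : l ≠ r) {s : Fin n}
    (hs : S s = Letter.star) : s = l ∨ s = r := by
  by_contra h
  push_neg at h
  have hsub : ({s, l, r} : Finset (Fin n)) ⊆ Finset.univ.filter fun p => S p = Letter.star := by
    intro x hx
    simp only [Finset.mem_insert, Finset.mem_singleton] at hx
    rcases hx with rfl | rfl | rfl <;> simp [hs, hl, hr]
  have h3 : ({s, l, r} : Finset (Fin n)).card = 3 := by
    rw [Finset.card_insert_of_notMem (by simp [h.1, h.2]),
      Finset.card_insert_of_notMem (by simp [hlr]), Finset.card_singleton]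
  have := Finset.card_le_card hsub
  rw [h3] at this
  rw [countStar_eq] at hcs
  unfold countL at hcs
  omega

/-- distinct leftmost and rightmost star when there are at least two stars -/
lemma lstar_lt_rstar {S : FSeq n} (h2 : 2 ≤ countStar S) {l r : Fin n}
    (hl : IsLeftmostStar S l) (hr : IsRightmostStar S r) : l < r := by
  obtain ⟨s, hs, hsl⟩ := second_star h2 hl.1
  have hls : l ≤ s := by
    by_contra h
    exact hl.2 s (lt_of_not_ge h) hs
  have hsr : s ≤ r := by
    by_contra h
    exact hr.2 s (lt_of_not_ge h) hs
  have : l < s := lt_of_le_of_ne hls (fun he => hsl he.symm)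
  exact lt_of_lt_of_le this hsr

/-- For a vertex (no stars, k ones, n-k zeros) different from v₀, the leftmost zero
precedes the rightmost one. -/
lemma lzero_lt_rone {k : ℕ} {S : FSeq n} (hns : ∀ p, S p ≠ Letter.star)
    (h1 : count1 S = k) (h0 : count0 S + k = n) (hne : S ≠ v0seq n k) (hk1 : 1 ≤ k)
    (hkn : k + 1 ≤ n) {i j : Fin n} (hi : IsLeftmostZero S i) (hj : IsRightmostOne S j) :
    i < j := by
  by_contra hc
  push_neg at hc   -- j ≤ i
  have hji : j < i := lt_of_le_of_ne hc (fun he => by have h' := hj.1; rw [he, hi.1] at h'; exact Letter.noConfusion h')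
  -- every one is ≤ j, every zero is ≥ i
  have hones : ∀ p, S p = Letter.one → p ≤ j := by
    intro p hp
    by_contra h
    exact hj.2 p (lt_of_not_ge h) hp
  have hzeros : ∀ p, S p = Letter.zero → i ≤ p := by
    intro p hp
    by_contra h
    exact hi.2 p (lt_of_not_ge h) hp
  apply hne
  have hki : k ≤ (i : ℕ) := by
    have hsub : (Finset.univ.filter fun p => S p = Letter.one) ⊆ Finset.Iio i := by
      intro x hx
      simp only [Finset.mem_filter] at hx
      simp only [Finset.mem_Iio]
      exact lt_of_le_of_lt (hones x hx.2) hji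
    have := Finset.card_le_card hsub
    rw [Fin.card_Iio] at this
    rw [count1_eq] at h1
    unfold countL at h1
    omega
  have hjk : (j : ℕ) + 1 ≤ k := by
    have hsub : (Finset.univ.filter fun p => S p = Letter.zero) ⊆ Finset.Ioi j := by
      intro x hx
      simp only [Finset.mem_filter] at hx
      simp only [Finset.mem_Ioi]
      exact lt_of_lt_of_le hji (hzeros x hx.2)
    have := Finset.card_le_card hsub
    rw [Fin.card_Ioi] at this
    rw [count0_eq] at h0
    unfold countL at h0
    have hjn : (j : ℕ) < n := j.isLt
    omega
  funext p
  unfold v0seq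
  rcases letter_cases (S p) with hp | hp | hp
  · rw [if_neg, hp]
    have := hzeros p hp
    have : (i : ℕ) ≤ (p : ℕ) := this
    omega
  · rw [if_pos, hp]
    have := hones p hp
    have : (p : ℕ) ≤ (j : ℕ) := this
    omega
  · exact absurd hp (hns p)


lemma fwd1 {k m0 m1 : ℕ} {S S' : FSeq n} (h : Type1 k m0 m1 S) (hA : Apply1 S S') :
    Type2 k m0 m1 S' ∧ Apply2 S' S := by
  obtain ⟨i, hi, rfl⟩ := hA
  have hO : OneRight S := by
    rcases h with ⟨_, hO, _⟩ | ⟨_, hO, _⟩ | ⟨_, hO, _⟩ <;> exact hO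
  have hstars : ∀ j, S j = Letter.star → j < i := stars_lt_of_oneRight hO hi
  have hS'i : Function.update S i Letter.star i = Letter.star := Function.update_self _ _ _
  have hS'j : ∀ j : Fin n, j ≠ i → Function.update S i Letter.star j = S j :=
    fun j hj => Function.update_of_ne hj _ _
  have hc1 : count1 (Function.update S i Letter.star) + 1 = count1 S := counts_one_star_1 hi.1
  have hc0 : count0 (Function.update S i Letter.star) = count0 S := counts_one_star_0 hi.1
  have hhs : hasStar (Function.update S i Letter.star) := ⟨i, hS'i⟩
  have hrs : IsRightmostStar (Function.update S i Letter.star) i := by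
    refine ⟨hS'i, fun j hj hs => ?_⟩
    rw [hS'j j (by intro he; rw [he] at hj; exact lt_irrefl _ hj)] at hs
    exact absurd (hstars j hs) (not_lt.2 (le_of_lt hj))
  have hA2 : Apply2 (Function.update S i Letter.star) S := by
    refine ⟨i, hrs, ?_⟩
    funext p
    by_cases hp : p = i
    · subst hp; rw [Function.update_self, hi.1]
    · rw [Function.update_of_ne hp, hS'j p hp]
  have hN : NoOneRight (Function.update S i Letter.star) := by
    refine ⟨hhs, fun p hp => ?_⟩
    have hpi : p ≠ i := by intro he; rw [he, hS'i] at hp; exact Letter.noConfusion hp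
    rw [hS'j p hpi] at hp
    have hple : p ≤ i := by
      by_contra hgt
      exact hi.2 p (lt_of_not_ge hgt) hp
    exact ⟨i, lt_of_le_of_ne hple hpi, hS'i⟩
  have hNZ' : NoZeroLeft S → NoZeroLeft (Function.update S i Letter.star) := by
    intro hNZ
    refine ⟨hhs, fun z hz => ?_⟩
    have hzi : z ≠ i := by intro he; rw [he, hS'i] at hz; exact Letter.noConfusion hz
    rw [hS'j z hzi] at hz
    obtain ⟨q, hq, hqs⟩ := hNZ.2 z hz
    have hqi : q ≠ i := by intro he; rw [he, hi.1] at hqs; exact Letter.noConfusion hqs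
    exact ⟨q, hq, by rw [hS'j q hqi]; exact hqs⟩
  rcases h with ⟨hk, _, hne⟩ | ⟨hk, _, he, hgt⟩ | ⟨hk, _, he, heq, hNZ⟩
  · exact ⟨Or.inl ⟨by omega, hN, by omega⟩, hA2⟩
  · exact ⟨Or.inr (Or.inl ⟨by omega, hN, by omega, by omega⟩), hA2⟩
  · exact ⟨Or.inr (Or.inr ⟨by omega, hN, by omega, by omega, hNZ' hNZ⟩), hA2⟩

lemma fwd3core {S S' : FSeq n} (hZ : ZeroLeft S) (hA : Apply3 S S') :
    count0 S' + 1 = count0 S ∧ count1 S' = count1 S ∧ countStar S' = countStar S + 1 ∧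
    NoZeroLeft S' ∧ Apply4 S' S ∧ (OneRight S → OneRight S') ∧
    (NoOneRight S → NoOneRight S') := by
  obtain ⟨i, hi, rfl⟩ := hA
  have hstars : ∀ j, S j = Letter.star → i < j := stars_gt_of_zeroLeft hZ hi
  have hS'i : Function.update S i Letter.star i = Letter.star := Function.update_self _ _ _
  have hS'j : ∀ j : Fin n, j ≠ i → Function.update S i Letter.star j = S j :=
    fun j hj => Function.update_of_ne hj _ _
  have hhs : hasStar (Function.update S i Letter.star) := ⟨i, hS'i⟩
  have hls : IsLeftmostStar (Function.update S i Letter.star) i := by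
    refine ⟨hS'i, fun j hj hs => ?_⟩
    rw [hS'j j (by intro he; rw [he] at hj; exact lt_irrefl _ hj)] at hs
    exact absurd (hstars j hs) (not_lt.2 (le_of_lt hj))
  refine ⟨counts_zero_star_0 hi.1, counts_zero_star_1 hi.1, counts_to_star (by simp [hi.1]),
    ?_, ?_, ?_, ?_⟩
  · refine ⟨hhs, fun z hz => ?_⟩
    have hzi : z ≠ i := by intro he; rw [he, hS'i] at hz; exact Letter.noConfusion hz
    rw [hS'j z hzi] at hz
    have hile : i ≤ z := by
      by_contra hgt
      exact hi.2 z (lt_of_not_ge hgt) hz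
    exact ⟨i, lt_of_le_of_ne hile (fun he => hzi he.symm), hS'i⟩
  · refine ⟨i, hls, ?_⟩
    funext p
    by_cases hp : p = i
    · subst hp; rw [Function.update_self, hi.1]
    · rw [Function.update_of_ne hp, hS'j p hp]
  · rintro ⟨hs0, p, hp1, hps⟩
    have hpi : p ≠ i := by intro he; rw [he, hi.1] at hp1; exact Letter.noConfusion hp1
    obtain ⟨s, hs⟩ := hs0
    have hsp : s ≤ p := by
      by_contra hgt
      exact hps s (lt_of_not_ge hgt) hs
    have hip : i < p := lt_of_lt_of_le (hstars s hs) hsp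
    refine ⟨hhs, p, by rw [hS'j p hpi]; exact hp1, fun j hj hjs => ?_⟩
    have hji : j ≠ i := by
      intro he
      rw [he] at hj
      exact absurd hip (not_lt.2 (le_of_lt hj))
    rw [hS'j j hji] at hjs
    exact hps j hj hjs
  · rintro ⟨hs0, hno⟩
    refine ⟨hhs, fun p hp => ?_⟩
    have hpi : p ≠ i := by intro he; rw [he, hS'i] at hp; exact Letter.noConfusion hp
    rw [hS'j p hpi] at hp
    obtain ⟨s, hsp, hs⟩ := hno p hp
    have hsi : s ≠ i := by intro he; rw [he, hi.1] at hs; exact Letter.noConfusion hs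
    exact ⟨s, hsp, by rw [hS'j s hsi]; exact hs⟩

lemma fwd3 {k : ℕ} {S S' : FSeq n} (h : Type3 k S) (hA : Apply3 S S') :
    Type4 k S' ∧ Apply4 S' S := by
  obtain ⟨h1, h2, hN, hZ⟩ := h
  obtain ⟨hc0, hc1, hcs, hNZ, hA4, hOp, hNp⟩ := fwd3core hZ hA
  exact ⟨⟨by omega, by omega, hNp hN, hNZ⟩, hA4⟩

lemma fwd5 {m0 m1 : ℕ} {S S' : FSeq n} (h : Type5 m0 m1 S) (hA : Apply3 S S') :
    Type6 m0 m1 S' ∧ Apply4 S' S := by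
  obtain ⟨h1, h2, hO, hZ⟩ := h
  obtain ⟨hc0, hc1, hcs, hNZ, hA4, hOp, hNp⟩ := fwd3core hZ hA
  exact ⟨⟨by omega, by omega, hOp hO, hNZ⟩, hA4⟩

lemma fwd7 {m0 m1 : ℕ} {S S' : FSeq n} (h : Type7 m0 m1 S) (hA : Apply3 S S') :
    Type8 m0 m1 S' ∧ Apply4 S' S := by
  obtain ⟨h1, h2, hN, hZ⟩ := h
  obtain ⟨hc0, hc1, hcs, hNZ, hA4, hOp, hNp⟩ := fwd3core hZ hA
  exact ⟨⟨by omega, by omega, hNp hN, hNZ⟩, hA4⟩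

lemma fwd9 {k : ℕ} {S S' : FSeq n} (hk1 : 1 ≤ k) (hkn : k + 1 ≤ n) (hF : FaceSeq k S)
    (h : Type9 k S) (hA : Apply9 S S') : Type10 k S' ∧ Apply10 S' S := by
  obtain ⟨h1, h0, hne⟩ := h
  have htot := count_total S
  have hcs0 : countStar S = 0 := by omega
  have hns : ∀ p, S p ≠ Letter.star := by
    intro p hp
    rw [countStar_eq] at hcs0
    exact absurd hcs0 (countL_pos hp).ne'
  obtain ⟨i, j, hi, hj, rfl⟩ := hA
  have hij : i < j := lzero_lt_rone hns h1 h0 hne hk1 hkn hi hj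
  have hijne : i ≠ j := Fin.ne_of_lt hij
  have hS'j : Function.update (Function.update S i Letter.star) j Letter.star j = Letter.star :=
    Function.update_self _ _ _
  have hS'i : Function.update (Function.update S i Letter.star) j Letter.star i = Letter.star := by
    rw [Function.update_of_ne hijne, Function.update_self]
  have hS'p : ∀ p : Fin n, p ≠ i → p ≠ j →
      Function.update (Function.update S i Letter.star) j Letter.star p = S p := by
    intro p hpi hpj
    rw [Function.update_of_ne hpj, Function.update_of_ne hpi]
  have hmidj : Function.update S i Letter.star j = Letter.one := by
    rw [Function.update_of_ne (Ne.symm hijne)]; exact hj.1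
  have hc1 : count1 (Function.update (Function.update S i Letter.star) j Letter.star) + 1
      = count1 S := by
    have e1 : count1 (Function.update S i Letter.star) = count1 S := counts_zero_star_1 hi.1
    have e2 := counts_one_star_1 (S := Function.update S i Letter.star) (i := j) hmidj
    omega
  have hc0 : count0 (Function.update (Function.update S i Letter.star) j Letter.star) + 1
      = count0 S := by
    have e1 := counts_zero_star_0 (S := S) (i := i) hi.1
    have e2 : count0 (Function.update (Function.update S i Letter.star) j Letter.star)
        = count0 (Function.update S i Letter.star) := counts_one_star_0 hmidj
    omega
  have hhs : hasStar (Function.update (Function.update S i Letter.star) j Letter.star) :=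
    ⟨i, hS'i⟩
  have hstars : ∀ p, Function.update (Function.update S i Letter.star) j Letter.star p
      = Letter.star → p = i ∨ p = j := by
    intro p hp
    by_cases hpi : p = i
    · exact Or.inl hpi
    by_cases hpj : p = j
    · exact Or.inr hpj
    rw [hS'p p hpi hpj] at hp
    exact absurd hp (hns p)
  have hls : IsLeftmostStar (Function.update (Function.update S i Letter.star) j Letter.star) i := by
    refine ⟨hS'i, fun p hp hps => ?_⟩
    rcases hstars p hps with rfl | rfl
    · exact lt_irrefl _ hp
    · exact absurd hij (not_lt.2 (le_of_lt hp))
  have hrs : IsRightmostStar (Function.update (Function.update S i Letter.star) j Letter.star) j := by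
    refine ⟨hS'j, fun p hp hps => ?_⟩
    rcases hstars p hps with rfl | rfl
    · exact absurd hij (not_lt.2 (le_of_lt hp))
    · exact lt_irrefl _ hp
  constructor
  · refine ⟨by omega, by omega, ⟨hhs, fun p hp => ?_⟩, ⟨hhs, fun z hz => ?_⟩⟩
    · have hpi : p ≠ i := by intro he; rw [he, hS'i] at hp; exact Letter.noConfusion hp
      have hpj : p ≠ j := by intro he; rw [he, hS'j] at hp; exact Letter.noConfusion hp
      rw [hS'p p hpi hpj] at hp
      have hple : p ≤ j := by
        by_contra hgt
        exact hj.2 p (lt_of_not_ge hgt) hp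
      exact ⟨j, lt_of_le_of_ne hple hpj, hS'j⟩
    · have hzi : z ≠ i := by intro he; rw [he, hS'i] at hz; exact Letter.noConfusion hz
      have hzj : z ≠ j := by intro he; rw [he, hS'j] at hz; exact Letter.noConfusion hz
      rw [hS'p z hzi hzj] at hz
      have hile : i ≤ z := by
        by_contra hgt
        exact hi.2 z (lt_of_not_ge hgt) hz
      exact ⟨i, lt_of_le_of_ne hile (fun he => hzi he.symm), hS'i⟩
  · refine ⟨i, j, hls, hrs, hijne, ?_⟩
    funext p
    by_cases hpj : p = j
    · subst hpj; rw [Function.update_self, hj.1]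
    by_cases hpi : p = i
    · subst hpi
      rw [Function.update_of_ne hijne, Function.update_self, hi.1]
    · rw [Function.update_of_ne hpj, Function.update_of_ne hpi, hS'p p hpi hpj]


lemma bwd2 {k m0 m1 : ℕ} {S : FSeq n} (hF : FaceSeq k S) (h : Type2 k m0 m1 S) :
    ∃ T, FaceSeq k T ∧ Type1 k m0 m1 T ∧ Apply1 T S ∧ Apply2 S T := by
  have hN : NoOneRight S := by rcases h with ⟨_, hN, _⟩ | ⟨_, hN, _⟩ | ⟨_, hN, _⟩ <;> exact hN
  have hk2 : count1 S + 2 ≤ k := by rcases h with ⟨hk, _⟩ | ⟨hk, _⟩ | ⟨hk, _⟩ <;> exact hk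
  have hhs := hN.1
  have hcsne := count_of_hasStar hhs
  have hface : count1 S + 1 ≤ k ∧ k + 1 ≤ count1 S + countStar S := by
    rcases hF with ⟨h1, _⟩ | hf
    · exact absurd h1 hcsne
    · exact hf
  obtain ⟨j, hj⟩ := exists_rightmostStar hhs
  obtain ⟨s, hs, hsj⟩ := second_star (by omega) hj.1
  have hsltj : s < j := by
    rcases lt_or_ge s j with h' | h'
    · exact h'
    · exact absurd hs (hj.2 s (lt_of_le_of_ne h' (Ne.symm hsj)))
  set T := Function.update S j Letter.one with hT
  have hTj : T j = Letter.one := Function.update_self _ _ _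
  have hTp : ∀ p : Fin n, p ≠ j → T p = S p := fun p hp => Function.update_of_ne hp _ _
  have hc1 : count1 T = count1 S + 1 := counts_star_one_1 hj.1
  have hc0 : count0 T = count0 S := counts_star_one_0 hj.1
  have hcsT : countStar T + 1 = countStar S := counts_star_one_s hj.1
  have hTs : T s = Letter.star := by rw [hTp s hsj]; exact hs
  have hO : OneRight T := by
    refine ⟨⟨s, hTs⟩, j, hTj, fun p hp hps => ?_⟩
    have hpj : p ≠ j := fun he => by rw [he] at hp; exact lt_irrefl _ hp
    rw [hTp p hpj] at hps
    exact hj.2 p hp hps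
  have hA1 : Apply1 T S := by
    refine ⟨j, ⟨hTj, fun p hp hpo => ?_⟩, ?_⟩
    · have hpj : p ≠ j := fun he => by rw [he] at hp; exact lt_irrefl _ hp
      rw [hTp p hpj] at hpo
      obtain ⟨q, hq, hqs⟩ := hN.2 p hpo
      exact hj.2 q (lt_trans hp hq) hqs
    · funext p
      by_cases hp : p = j
      · subst hp; rw [Function.update_self]; exact hj.1
      · rw [Function.update_of_ne hp, hTp p hp]
  have hNZ' : NoZeroLeft S → NoZeroLeft T := by
    intro hNZ
    refine ⟨⟨s, hTs⟩, fun z hz => ?_⟩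
    have hzj : z ≠ j := fun he => by rw [he, hTj] at hz; exact Letter.noConfusion hz
    rw [hTp z hzj] at hz
    obtain ⟨q, hq, hqs⟩ := hNZ.2 z hz
    by_cases hqj : q = j
    · subst hqj
      exact ⟨s, lt_trans hsltj hq, hTs⟩
    · exact ⟨q, hq, by rw [hTp q hqj]; exact hqs⟩
  have hA2 : Apply2 S T := ⟨j, hj, hT⟩
  refine ⟨T, Or.inr ⟨by omega, by omega⟩, ?_, hA1, hA2⟩
  rcases h with ⟨_, _, hc⟩ | ⟨_, _, hc, hc0'⟩ | ⟨_, _, hc, hc0', hNZ⟩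
  · exact Or.inl ⟨by omega, hO, by omega⟩
  · exact Or.inr (Or.inl ⟨by omega, hO, by omega, by omega⟩)
  · exact Or.inr (Or.inr ⟨by omega, hO, by omega, by omega, hNZ' hNZ⟩)

lemma bwdZcore {S : FSeq n} {l : Fin n} (hNZ : NoZeroLeft S) (hcs2 : 2 ≤ countStar S)
    (hl : IsLeftmostStar S l) :
    ZeroLeft (Function.update S l Letter.zero) ∧
    Apply3 (Function.update S l Letter.zero) S ∧
    Apply4 S (Function.update S l Letter.zero) ∧
    (OneRight S → OneRight (Function.update S l Letter.zero)) ∧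
    (NoOneRight S → NoOneRight (Function.update S l Letter.zero)) := by
  obtain ⟨s, hs, hsl⟩ := second_star hcs2 hl.1
  have hlts : l < s := by
    rcases lt_or_ge l s with h' | h'
    · exact h'
    · exact absurd hs (hl.2 s (lt_of_le_of_ne h' hsl))
  have hTl : Function.update S l Letter.zero l = Letter.zero := Function.update_self _ _ _
  have hTp : ∀ p : Fin n, p ≠ l → Function.update S l Letter.zero p = S p :=
    fun p hp => Function.update_of_ne hp _ _
  have hTs : Function.update S l Letter.zero s = Letter.star := by rw [hTp s hsl]; exact hs
  have hzero_gt : ∀ z, S z = Letter.zero → l < z := by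
    intro z hz
    obtain ⟨q, hq, hqs⟩ := hNZ.2 z hz
    have hlq : l ≤ q := by
      by_contra h'
      exact hl.2 q (lt_of_not_ge h') hqs
    exact lt_of_le_of_lt hlq hq
  refine ⟨⟨⟨s, hTs⟩, l, hTl, fun p hp hps => ?_⟩, ?_, ⟨l, hl, rfl⟩, ?_, ?_⟩
  · have hpl : p ≠ l := fun he => by rw [he] at hp; exact lt_irrefl _ hp
    rw [hTp p hpl] at hps
    exact hl.2 p hp hps
  · refine ⟨l, ⟨hTl, fun p hp hpz => ?_⟩, ?_⟩
    · have hpl : p ≠ l := fun he => by rw [he] at hp; exact lt_irrefl _ hp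
      rw [hTp p hpl] at hpz
      exact absurd hp (not_lt.2 (le_of_lt (hzero_gt p hpz)))
    · funext p
      by_cases hp : p = l
      · subst hp; rw [Function.update_self]; exact hl.1
      · rw [Function.update_of_ne hp, hTp p hp]
  · rintro ⟨-, p, hp1, hps⟩
    have hpl : p ≠ l := fun he => by rw [he, hl.1] at hp1; exact Letter.noConfusion hp1
    refine ⟨⟨s, hTs⟩, p, by rw [hTp p hpl]; exact hp1, fun q hq hqs => ?_⟩
    have hql : q ≠ l := fun he => by rw [he, hTl] at hqs; exact Letter.noConfusion hqs
    rw [hTp q hql] at hqs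
    exact hps q hq hqs
  · rintro ⟨-, hno⟩
    refine ⟨⟨s, hTs⟩, fun p hp => ?_⟩
    have hpl : p ≠ l := fun he => by rw [he, hTl] at hp; exact Letter.noConfusion hp
    rw [hTp p hpl] at hp
    obtain ⟨q, hq, hqs⟩ := hno p hp
    by_cases hql : q = l
    · subst hql
      exact ⟨s, lt_trans hq hlts, hTs⟩
    · exact ⟨q, hq, by rw [hTp q hql]; exact hqs⟩

lemma bwd4 {k : ℕ} {S : FSeq n} (hF : FaceSeq k S) (h : Type4 k S) :
    ∃ T, FaceSeq k T ∧ Type3 k T ∧ Apply3 T S ∧ Apply4 S T := by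
  obtain ⟨h1, h2, hN, hNZ⟩ := h
  have htot := count_total S
  have hcsne := count_of_hasStar hN.1
  have hcs2 : 2 ≤ countStar S := by omega
  obtain ⟨l, hl⟩ := exists_leftmostStar hN.1
  obtain ⟨hZ, hA3, hA4, hOp, hNp⟩ := bwdZcore hNZ hcs2 hl
  have hc0 : count0 (Function.update S l Letter.zero) = count0 S + 1 := counts_star_zero_0 hl.1
  have hc1 : count1 (Function.update S l Letter.zero) = count1 S := counts_star_zero_1 hl.1
  have hcs : countStar (Function.update S l Letter.zero) + 1 = countStar S := counts_star_zero_s hl.1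
  exact ⟨_, Or.inr ⟨by omega, by omega⟩, ⟨by omega, by omega, hNp hN, hZ⟩, hA3, hA4⟩

lemma bwd6 {k m0 m1 : ℕ} {S : FSeq n} (hm0 : m0 + k + 1 ≤ n) (hm1u : m1 + 1 ≤ k)
    (hF : FaceSeq k S) (h : Type6 m0 m1 S) :
    ∃ T, FaceSeq k T ∧ Type5 m0 m1 T ∧ Apply3 T S ∧ Apply4 S T := by
  obtain ⟨h1, h2, hO, hNZ⟩ := h
  have htot := count_total S
  have hcsne := count_of_hasStar hO.1
  have hface : count1 S + 1 ≤ k ∧ k + 1 ≤ count1 S + countStar S := by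
    rcases hF with ⟨hx, _⟩ | hf
    · exact absurd hx hcsne
    · exact hf
  have hcs2 : 2 ≤ countStar S := by omega
  obtain ⟨l, hl⟩ := exists_leftmostStar hO.1
  obtain ⟨hZ, hA3, hA4, hOp, hNp⟩ := bwdZcore hNZ hcs2 hl
  have hc0 : count0 (Function.update S l Letter.zero) = count0 S + 1 := counts_star_zero_0 hl.1
  have hc1 : count1 (Function.update S l Letter.zero) = count1 S := counts_star_zero_1 hl.1
  have hcs : countStar (Function.update S l Letter.zero) + 1 = countStar S := counts_star_zero_s hl.1
  exact ⟨_, Or.inr ⟨by omega, by omega⟩, ⟨by omega, by omega, hOp hO, hZ⟩, hA3, hA4⟩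

lemma bwd8 {k m0 m1 : ℕ} {S : FSeq n} (hm0 : m0 + k + 1 ≤ n) (hm1u : m1 + 1 ≤ k)
    (hF : FaceSeq k S) (h : Type8 m0 m1 S) :
    ∃ T, FaceSeq k T ∧ Type7 m0 m1 T ∧ Apply3 T S ∧ Apply4 S T := by
  obtain ⟨h1, h2, hN, hNZ⟩ := h
  have htot := count_total S
  have hcsne := count_of_hasStar hN.1
  have hface : count1 S + 1 ≤ k ∧ k + 1 ≤ count1 S + countStar S := by
    rcases hF with ⟨hx, _⟩ | hf
    · exact absurd hx hcsne
    · exact hf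
  have hcs2 : 2 ≤ countStar S := by omega
  obtain ⟨l, hl⟩ := exists_leftmostStar hN.1
  obtain ⟨hZ, hA3, hA4, hOp, hNp⟩ := bwdZcore hNZ hcs2 hl
  have hc0 : count0 (Function.update S l Letter.zero) = count0 S + 1 := counts_star_zero_0 hl.1
  have hc1 : count1 (Function.update S l Letter.zero) = count1 S := counts_star_zero_1 hl.1
  have hcs : countStar (Function.update S l Letter.zero) + 1 = countStar S := counts_star_zero_s hl.1
  exact ⟨_, Or.inr ⟨by omega, by omega⟩, ⟨by omega, by omega, hNp hN, hZ⟩, hA3, hA4⟩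

lemma bwd10 {k : ℕ} {S : FSeq n} (h : Type10 k S) :
    ∃ T, FaceSeq k T ∧ Type9 k T ∧ Apply9 T S ∧ Apply10 S T := by
  obtain ⟨h1, h0, hN, hNZ⟩ := h
  have htot := count_total S
  have hcs : countStar S = 2 := by omega
  obtain ⟨l, hl⟩ := exists_leftmostStar hN.1
  obtain ⟨r, hr⟩ := exists_rightmostStar hN.1
  have hlr : l < r := lstar_lt_rstar (by omega) hl hr
  have hlrne : l ≠ r := Fin.ne_of_lt hlr
  set T := Function.update (Function.update S l Letter.zero) r Letter.one with hT
  have hmidr : Function.update S l Letter.zero r = Letter.star := by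
    rw [Function.update_of_ne (Ne.symm hlrne)]; exact hr.1
  have hTl : T l = Letter.zero := by rw [hT, Function.update_of_ne hlrne, Function.update_self]
  have hTr : T r = Letter.one := by rw [hT, Function.update_self]
  have hTp : ∀ p : Fin n, p ≠ l → p ≠ r → T p = S p := by
    intro p hpl hpr
    rw [hT, Function.update_of_ne hpr, Function.update_of_ne hpl]
  have hc0 : count0 T = count0 S + 1 := by
    have e1 := counts_star_zero_0 (S := S) hl.1
    have e2 : count0 T = count0 (Function.update S l Letter.zero) := counts_star_one_0 hmidr
    omega
  have hc1 : count1 T = count1 S + 1 := by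
    have e1 := counts_star_zero_1 (S := S) hl.1
    have e2 := counts_star_one_1 (S := Function.update S l Letter.zero) hmidr
    rw [← hT] at e2
    omega
  have hcsT : countStar T = 0 := by
    have e1 := counts_star_zero_s (S := S) hl.1
    have e2 := counts_star_one_s (S := Function.update S l Letter.zero) hmidr
    rw [← hT] at e2
    omega
  have hstars : ∀ p, S p = Letter.star → p = l ∨ p = r :=
    fun p hp => star_mem_pair hcs hl.1 hr.1 hlrne hp
  have hTne : T ≠ v0seq n k := by
    intro he
    have h1' : v0seq n k l = Letter.zero := by rw [← he]; exact hTl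
    have h2' : v0seq n k r = Letter.one := by rw [← he]; exact hTr
    unfold v0seq at h1' h2'
    have hlk : ¬ ((l : ℕ) < k) := by
      intro hlt
      rw [if_pos hlt] at h1'
      exact Letter.noConfusion h1'
    have hrk : (r : ℕ) < k := by
      by_contra hge
      rw [if_neg hge] at h2'
      exact Letter.noConfusion h2'
    have hlrv : (l : ℕ) < (r : ℕ) := hlr
    omega
  have hzero_gt : ∀ z, S z = Letter.zero → l < z := by
    intro z hz
    obtain ⟨q, hq, hqs⟩ := hNZ.2 z hz
    rcases hstars q hqs with rfl | rfl
    · exact hq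
    · exact lt_trans hlr hq
  have hone_lt : ∀ p, S p = Letter.one → p < r := by
    intro p hp
    obtain ⟨q, hq, hqs⟩ := hN.2 p hp
    rcases hstars q hqs with rfl | rfl
    · exact lt_trans hq hlr
    · exact hq
  have hA9 : Apply9 T S := by
    refine ⟨l, r, ⟨hTl, fun p hp hpz => ?_⟩, ⟨hTr, fun p hp hpo => ?_⟩, ?_⟩
    · have hpl : p ≠ l := fun he => by rw [he] at hp; exact lt_irrefl _ hp
      have hpr : p ≠ r := fun he => absurd (he ▸ hp) (not_lt.2 (le_of_lt hlr))
      rw [hTp p hpl hpr] at hpz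
      exact absurd hp (not_lt.2 (le_of_lt (hzero_gt p hpz)))
    · have hpr : p ≠ r := fun he => by rw [he] at hp; exact lt_irrefl _ hp
      have hpl : p ≠ l := fun he => absurd (he ▸ hp) (not_lt.2 (le_of_lt hlr))
      rw [hTp p hpl hpr] at hpo
      exact absurd hp (not_lt.2 (le_of_lt (hone_lt p hpo)))
    · funext p
      by_cases hpr : p = r
      · subst hpr; rw [Function.update_self]; exact hr.1
      by_cases hpl : p = l
      · subst hpl; rw [Function.update_of_ne hlrne, Function.update_self]; exact hl.1
      · rw [Function.update_of_ne hpr, Function.update_of_ne hpl, hTp p hpl hpr]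
  have hA10 : Apply10 S T := ⟨l, r, hl, hr, hlrne, hT⟩
  exact ⟨T, Or.inl ⟨hcsT, by omega⟩, ⟨by omega, by omega, hTne⟩, hA9, hA10⟩


def fill (S : FSeq n) (A : Finset (Fin n)) : FSeq n :=
  fun p => if S p = Letter.star then (if p ∈ A then Letter.one else Letter.zero) else S p

lemma fill_no_star (S : FSeq n) (A : Finset (Fin n)) : ∀ p, fill S A p ≠ Letter.star := by
  intro p
  unfold fill
  split_ifs with h1 h2
  · simp
  · simp
  · exact h1

lemma fill_agrees (S : FSeq n) (A : Finset (Fin n)) : ∀ p, S p ≠ Letter.star → fill S A p = S p := by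
  intro p hp
  unfold fill
  exact if_neg hp


lemma fill_count1 {S : FSeq n} {A : Finset (Fin n)}
    (hA : A ⊆ Finset.univ.filter fun p => S p = Letter.star) :
    count1 (fill S A) = count1 S + A.card := by
  rw [count1_eq, count1_eq]
  unfold countL
  have he : (Finset.univ.filter fun p => fill S A p = Letter.one) =
      (Finset.univ.filter fun p => S p = Letter.one) ∪ A := by
    ext p
    simp only [Finset.mem_filter, Finset.mem_univ, true_and, Finset.mem_union]
    unfold fill
    by_cases hs : S p = Letter.star
    · rw [if_pos hs]
      by_cases hpA : p ∈ A
      · simp [hpA, hs]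
      · simp [hpA, hs]
    · rw [if_neg hs]
      constructor
      · exact fun h => Or.inl h
      · rintro (h | h)
        · exact h
        · exact absurd (hA h) (by simp [hs])
  rw [he, Finset.card_union_of_disjoint]
  rw [Finset.disjoint_left]
  intro p hp hpA
  simp only [Finset.mem_filter, Finset.mem_univ, true_and] at hp
  have := hA hpA
  simp only [Finset.mem_filter, Finset.mem_univ, true_and] at this
  rw [hp] at this
  exact Letter.noConfusion this

lemma exists_vertex_zero {k : ℕ} {S' : FSeq n} {i : Fin n} (hi : S' i = Letter.star)
    (h1 : count1 S' ≤ k) (h2 : k + 1 ≤ count1 S' + countStar S') :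
    ∃ w, w ∈ VertexSet k S' ∧ w i = Letter.zero := by
  have hcard : (Finset.univ.filter fun p => S' p = Letter.star).card = countStar S' := rfl
  have hmem : i ∈ Finset.univ.filter fun p => S' p = Letter.star := by simp [hi]
  have hBcard : ((Finset.univ.filter fun p => S' p = Letter.star).erase i).card + 1
      = countStar S' := by
    rw [Finset.card_erase_of_mem hmem, hcard]
    have : 0 < countStar S' := by omega
    omega
  obtain ⟨A, hAsub, hAcard⟩ := Finset.exists_subset_card_eq
    (s := (Finset.univ.filter fun p => S' p = Letter.star).erase i) (n := k - count1 S')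
    (by omega)
  have hAsub' : A ⊆ Finset.univ.filter fun p => S' p = Letter.star :=
    hAsub.trans (Finset.erase_subset _ _)
  refine ⟨fill S' A, ⟨fill_no_star _ _, ?_, fill_agrees _ _⟩, ?_⟩
  · rw [fill_count1 hAsub', hAcard]
    omega
  · have hiA : i ∉ A := fun h => (Finset.notMem_erase i _) (hAsub h)
    unfold fill
    rw [if_pos hi, if_neg hiA]

lemma exists_vertex_one {k : ℕ} {S' : FSeq n} {i : Fin n} (hi : S' i = Letter.star)
    (h1 : count1 S' + 1 ≤ k) (h2 : k ≤ count1 S' + countStar S') :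
    ∃ w, w ∈ VertexSet k S' ∧ w i = Letter.one := by
  have hcard : (Finset.univ.filter fun p => S' p = Letter.star).card = countStar S' := rfl
  have hmem : i ∈ Finset.univ.filter fun p => S' p = Letter.star := by simp [hi]
  have hBcard : ((Finset.univ.filter fun p => S' p = Letter.star).erase i).card + 1
      = countStar S' := by
    rw [Finset.card_erase_of_mem hmem, hcard]
    have : 0 < countStar S' := by
      rw [countStar_eq]
      exact countL_pos hi
    omega
  obtain ⟨A, hAsub, hAcard⟩ := Finset.exists_subset_card_eq
    (s := (Finset.univ.filter fun p => S' p = Letter.star).erase i) (n := k - count1 S' - 1)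
    (by omega)
  have hiA : i ∉ A := fun h => (Finset.notMem_erase i _) (hAsub h)
  have hAsub' : insert i A ⊆ Finset.univ.filter fun p => S' p = Letter.star := by
    intro x hx
    rcases Finset.mem_insert.1 hx with rfl | hx'
    · exact hmem
    · exact (hAsub.trans (Finset.erase_subset _ _)) hx'
  refine ⟨fill S' (insert i A), ⟨fill_no_star _ _, ?_, fill_agrees _ _⟩, ?_⟩
  · rw [fill_count1 hAsub', Finset.card_insert_of_notMem hiA, hAcard]
    omega
  · unfold fill
    rw [if_pos hi, if_pos (Finset.mem_insert_self i A)]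

lemma vsubset_update {k : ℕ} {S : FSeq n} {i : Fin n} :
    VertexSet k S ⊆ VertexSet k (Function.update S i Letter.star) := by
  rintro v ⟨hns, hc, hag⟩
  refine ⟨hns, hc, fun p hp => ?_⟩
  have hpi : p ≠ i := by
    intro he
    rw [he, Function.update_self] at hp
    exact hp rfl
  rw [Function.update_of_ne hpi] at hp ⊢
  exact hag p hp

lemma fdim_pos {S : FSeq n} (h : countStar S ≠ 0) : fdim S = countStar S - 1 := if_neg h

lemma codim_of_vmatch {k m0 m1 : ℕ} {S S' : FSeq n} (hm1u : m1 + 1 ≤ k)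
    (hV : Vmatch k m0 m1 S S') : Codim1 k S S' := by
  obtain ⟨hF, hb⟩ := hV
  have htot := count_total S
  -- common handler for the Apply-one-update-to-star branches
  have main : ∀ i : Fin n, S i ≠ Letter.star → hasStar S →
      (∃ w, w ∈ VertexSet k (Function.update S i Letter.star) ∧ w i ≠ S i) →
      countStar (Function.update S i Letter.star) = countStar S + 1 →
      Codim1 k S (Function.update S i Letter.star) := by
    intro i hins hhs ⟨w, hw, hwi⟩ hcs
    have hcsne := count_of_hasStar hhs
    constructor
    · rw [Set.ssubset_iff_of_subset vsubset_update]
      refine ⟨w, hw, fun hwS => ?_⟩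
      exact hwi (hwS.2.2 i hins)
    · rw [fdim_pos hcsne, fdim_pos (by omega), hcs]
      omega
  rcases hb with ⟨ht, hA⟩ | ⟨ht, hA⟩ | ⟨ht, hA⟩ | ⟨ht, hA⟩ | ⟨ht, hA⟩
  · -- type 1
    obtain ⟨i, hi, rfl⟩ := hA
    have hO : OneRight S := by
      rcases ht with ⟨_, hO, _⟩ | ⟨_, hO, _⟩ | ⟨_, hO, _⟩ <;> exact hO
    have hk : count1 S + 1 ≤ k := by
      rcases ht with ⟨hk, _⟩ | ⟨hk, _⟩ | ⟨hk, _⟩ <;> exact hk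
    have hcsne := count_of_hasStar hO.1
    have hface : count1 S + 1 ≤ k ∧ k + 1 ≤ count1 S + countStar S := by
      rcases hF with ⟨h1, _⟩ | hf
      · exact absurd h1 hcsne
      · exact hf
    have hins : S i ≠ Letter.star := by simp [hi.1]
    have hc1 : count1 (Function.update S i Letter.star) + 1 = count1 S := counts_one_star_1 hi.1
    have hcs : countStar (Function.update S i Letter.star) = countStar S + 1 := counts_to_star hins
    refine main i hins hO.1 ?_ hcs
    have hS'i : Function.update S i Letter.star i = Letter.star := Function.update_self _ _ _
    obtain ⟨w, hw, hwz⟩ := exists_vertex_zero (k := k) hS'i (by omega) (by omega)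
    refine ⟨w, hw, ?_⟩
    rw [hwz, hi.1]
    simp
  · -- type 3
    obtain ⟨h1, h2, hN, hZ⟩ := ht
    obtain ⟨i, hi, rfl⟩ := hA
    have hcsne := count_of_hasStar hN.1
    have hface : count1 S + 1 ≤ k ∧ k + 1 ≤ count1 S + countStar S := by
      rcases hF with ⟨hx, _⟩ | hf
      · exact absurd hx hcsne
      · exact hf
    have hins : S i ≠ Letter.star := by simp [hi.1]
    have hc1 : count1 (Function.update S i Letter.star) = count1 S := counts_zero_star_1 hi.1
    have hcs : countStar (Function.update S i Letter.star) = countStar S + 1 := counts_to_star hins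
    refine main i hins hN.1 ?_ hcs
    have hS'i : Function.update S i Letter.star i = Letter.star := Function.update_self _ _ _
    obtain ⟨w, hw, hwo⟩ := exists_vertex_one (k := k) hS'i (by omega) (by omega)
    refine ⟨w, hw, ?_⟩
    rw [hwo, hi.1]
    simp
  · -- type 5
    obtain ⟨h1, h2, hO, hZ⟩ := ht
    obtain ⟨i, hi, rfl⟩ := hA
    have hcsne := count_of_hasStar hO.1
    have hface : count1 S + 1 ≤ k ∧ k + 1 ≤ count1 S + countStar S := by
      rcases hF with ⟨hx, _⟩ | hf
      · exact absurd hx hcsne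
      · exact hf
    have hins : S i ≠ Letter.star := by simp [hi.1]
    have hc1 : count1 (Function.update S i Letter.star) = count1 S := counts_zero_star_1 hi.1
    have hcs : countStar (Function.update S i Letter.star) = countStar S + 1 := counts_to_star hins
    refine main i hins hO.1 ?_ hcs
    have hS'i : Function.update S i Letter.star i = Letter.star := Function.update_self _ _ _
    obtain ⟨w, hw, hwo⟩ := exists_vertex_one (k := k) hS'i (by omega) (by omega)
    refine ⟨w, hw, ?_⟩
    rw [hwo, hi.1]
    simp
  · -- type 7
    obtain ⟨h1, h2, hN, hZ⟩ := ht
    obtain ⟨i, hi, rfl⟩ := hA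
    have hcsne := count_of_hasStar hN.1
    have hface : count1 S + 1 ≤ k ∧ k + 1 ≤ count1 S + countStar S := by
      rcases hF with ⟨hx, _⟩ | hf
      · exact absurd hx hcsne
      · exact hf
    have hins : S i ≠ Letter.star := by simp [hi.1]
    have hc1 : count1 (Function.update S i Letter.star) = count1 S := counts_zero_star_1 hi.1
    have hcs : countStar (Function.update S i Letter.star) = countStar S + 1 := counts_to_star hins
    refine main i hins hN.1 ?_ hcs
    have hS'i : Function.update S i Letter.star i = Letter.star := Function.update_self _ _ _
    obtain ⟨w, hw, hwo⟩ := exists_vertex_one (k := k) hS'i (by omega) (by omega)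
    refine ⟨w, hw, ?_⟩
    rw [hwo, hi.1]
    simp
  · -- type 9
    obtain ⟨h1, h0, hne⟩ := ht
    obtain ⟨i, j, hi, hj, rfl⟩ := hA
    have hcs0 : countStar S = 0 := by omega
    have hns : ∀ p, S p ≠ Letter.star := by
      intro p hp
      rw [countStar_eq] at hcs0
      exact absurd hcs0 (countL_pos hp).ne'
    have hij : i ≠ j := by
      intro he
      have h' := hi.1
      rw [he, hj.1] at h'
      exact Letter.noConfusion h'
    have hS'j : Function.update (Function.update S i Letter.star) j Letter.star j
        = Letter.star := Function.update_self _ _ _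
    have hS'i : Function.update (Function.update S i Letter.star) j Letter.star i
        = Letter.star := by
      rw [Function.update_of_ne hij, Function.update_self]
    have hS'p : ∀ p : Fin n, p ≠ i → p ≠ j →
        Function.update (Function.update S i Letter.star) j Letter.star p = S p := by
      intro p hpi hpj
      rw [Function.update_of_ne hpj, Function.update_of_ne hpi]
    have hveq : ∀ v ∈ VertexSet k S, v = S := by
      rintro v ⟨hnsv, hcv, hagv⟩
      funext p
      exact hagv p (hns p)
    have hSmem : S ∈ VertexSet k S := ⟨hns, h1, fun p _ => rfl⟩
    have hsub : VertexSet k S ⊆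
        VertexSet k (Function.update (Function.update S i Letter.star) j Letter.star) := by
      intro v hv
      rw [hveq v hv]
      refine ⟨hns, h1, fun p hp => ?_⟩
      have hpj : p ≠ j := by intro he; rw [he] at hp; exact hp hS'j
      have hpi : p ≠ i := by intro he; rw [he] at hp; exact hp hS'i
      exact (hS'p p hpi hpj).symm
    -- the swapped vertex
    have hwi1 : Function.update S i Letter.one i = Letter.one := Function.update_self _ _ _
    set w := Function.update (Function.update S i Letter.one) j Letter.zero with hw
    have hwi : w i = Letter.one := by
      rw [hw, Function.update_of_ne hij, Function.update_self]
    have hwj : w j = Letter.zero := by rw [hw, Function.update_self]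
    have hwp : ∀ p : Fin n, p ≠ i → p ≠ j → w p = S p := by
      intro p hpi hpj
      rw [hw, Function.update_of_ne hpj, Function.update_of_ne hpi]
    have hmidj : Function.update S i Letter.one j = Letter.one := by
      rw [Function.update_of_ne (Ne.symm hij)]; exact hj.1
    have hwc : count1 w = k := by
      have e1 := counts_zero_one_1 (S := S) hi.1
      have e2 := counts_one_zero_1 (S := Function.update S i Letter.one) hmidj
      rw [← hw] at e2
      omega
    have hwns : ∀ p, w p ≠ Letter.star := by
      intro p
      by_cases hpj : p = j
      · subst hpj; rw [hwj]; simp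
      by_cases hpi : p = i
      · subst hpi; rw [hwi]; simp
      · rw [hwp p hpi hpj]; exact hns p
    have hwmem : w ∈ VertexSet k
        (Function.update (Function.update S i Letter.star) j Letter.star) := by
      refine ⟨hwns, hwc, fun p hp => ?_⟩
      have hpj : p ≠ j := by intro he; rw [he] at hp; exact hp hS'j
      have hpi : p ≠ i := by intro he; rw [he] at hp; exact hp hS'i
      rw [hwp p hpi hpj, hS'p p hpi hpj]
    constructor
    · rw [Set.ssubset_iff_of_subset hsub]
      refine ⟨w, hwmem, fun hwS => ?_⟩
      have := hveq w hwS
      have : w i = S i := by rw [this]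
      rw [hwi, hi.1] at this
      exact Letter.noConfusion this
    · have hcs' : countStar (Function.update (Function.update S i Letter.star) j
          Letter.star) = 2 := by
        have e1 := counts_to_star (S := S) (i := i) (by simp [hi.1])
        have e2 := counts_to_star (S := Function.update S i Letter.star) (i := j)
          (by rw [Function.update_of_ne (Ne.symm hij)]; simp [hj.1])
        omega
      rw [fdim, if_pos hcs0, fdim, if_neg (by omega), hcs']


lemma v0_starless {k : ℕ} : ¬ hasStar (v0seq n k) := fun ⟨i, hi⟩ => v0_no_star i hi

lemma vmatch_fst_cases {k m0 m1 : ℕ} {S q : FSeq n} (hV : Vmatch k m0 m1 S q) :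
    hasStar S ∨ Type9 k S := by
  rcases hV.2 with ⟨h1, _⟩ | ⟨h1, _⟩ | ⟨h1, _⟩ | ⟨h1, _⟩ | ⟨h1, _⟩
  · rcases h1 with ⟨_, hO, _⟩ | ⟨_, hO, _⟩ | ⟨_, hO, _⟩ <;> exact Or.inl hO.1
  · exact Or.inl h1.2.2.1.1
  · exact Or.inl h1.2.2.1.1
  · exact Or.inl h1.2.2.1.1
  · exact Or.inr h1

lemma vmatch_snd_hasStar {k m0 m1 : ℕ} {T S : FSeq n} (hV : Vmatch k m0 m1 T S) :
    hasStar S := by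
  rcases hV.2 with ⟨_, i, _, rfl⟩ | ⟨_, i, _, rfl⟩ | ⟨_, i, _, rfl⟩ | ⟨_, i, _, rfl⟩ |
    ⟨_, i, j, _, _, rfl⟩
  · exact ⟨i, Function.update_self _ _ _⟩
  · exact ⟨i, Function.update_self _ _ _⟩
  · exact ⟨i, Function.update_self _ _ _⟩
  · exact ⟨i, Function.update_self _ _ _⟩
  · exact ⟨j, Function.update_self _ _ _⟩

lemma vmatch_fst_char {k m0 m1 t : ℕ} (hm1u : m1 + 1 ≤ k) {S q : FSeq n}
    (hV : Vmatch k m0 m1 S q) (ht : OfType k m0 m1 t S) :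
    (t = 1 ∧ Apply1 S q) ∨ (t = 3 ∧ Apply3 S q) ∨ (t = 5 ∧ Apply3 S q) ∨
    (t = 7 ∧ Apply3 S q) ∨ (t = 9 ∧ Apply9 S q) := by
  rcases hV.2 with ⟨h1, hA⟩ | ⟨h1, hA⟩ | ⟨h1, hA⟩ | ⟨h1, hA⟩ | ⟨h1, hA⟩
  · exact Or.inl ⟨type_excl hm1u ht (show OfType k m0 m1 1 S from h1), hA⟩
  · exact Or.inr (Or.inl ⟨type_excl hm1u ht (show OfType k m0 m1 3 S from h1), hA⟩)
  · exact Or.inr (Or.inr (Or.inl ⟨type_excl hm1u ht (show OfType k m0 m1 5 S from h1), hA⟩))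
  · exact Or.inr (Or.inr (Or.inr (Or.inl
      ⟨type_excl hm1u ht (show OfType k m0 m1 7 S from h1), hA⟩)))
  · exact Or.inr (Or.inr (Or.inr (Or.inr
      ⟨type_excl hm1u ht (show OfType k m0 m1 9 S from h1), hA⟩)))

lemma vmatch_snd_char {k m0 m1 t : ℕ} (hk1 : 1 ≤ k) (hkn : k + 1 ≤ n) (hm1u : m1 + 1 ≤ k)
    {p S : FSeq n} (hV : Vmatch k m0 m1 p S) (ht : OfType k m0 m1 t S) :
    (t = 2 ∧ Apply2 S p) ∨ (t = 4 ∧ Apply4 S p) ∨ (t = 6 ∧ Apply4 S p) ∨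
    (t = 8 ∧ Apply4 S p) ∨ (t = 10 ∧ Apply10 S p) := by
  obtain ⟨hFp, hb⟩ := hV
  rcases hb with ⟨h1, hA⟩ | ⟨h1, hA⟩ | ⟨h1, hA⟩ | ⟨h1, hA⟩ | ⟨h1, hA⟩
  · obtain ⟨h2, hA2⟩ := fwd1 h1 hA
    exact Or.inl ⟨type_excl hm1u ht (show OfType k m0 m1 2 S from h2), hA2⟩
  · obtain ⟨h2, hA2⟩ := fwd3 h1 hA
    exact Or.inr (Or.inl ⟨type_excl hm1u ht (show OfType k m0 m1 4 S from h2), hA2⟩)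
  · obtain ⟨h2, hA2⟩ := fwd5 h1 hA
    exact Or.inr (Or.inr (Or.inl ⟨type_excl hm1u ht (show OfType k m0 m1 6 S from h2), hA2⟩))
  · obtain ⟨h2, hA2⟩ := fwd7 h1 hA
    exact Or.inr (Or.inr (Or.inr (Or.inl
      ⟨type_excl hm1u ht (show OfType k m0 m1 8 S from h2), hA2⟩)))
  · obtain ⟨h2, hA2⟩ := fwd9 hk1 hkn hFp h1 hA
    exact Or.inr (Or.inr (Or.inr (Or.inr
      ⟨type_excl hm1u ht (show OfType k m0 m1 10 S from h2), hA2⟩)))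

lemma vmatch_fst_det {k m0 m1 t : ℕ} (hm1u : m1 + 1 ≤ k) {S q q' : FSeq n}
    (ht : OfType k m0 m1 t S) (h1 : Vmatch k m0 m1 S q) (h2 : Vmatch k m0 m1 S q') :
    q = q' := by
  rcases vmatch_fst_char hm1u h1 ht with ⟨e1, hA1⟩|⟨e1, hA1⟩|⟨e1, hA1⟩|⟨e1, hA1⟩|⟨e1, hA1⟩ <;>
  rcases vmatch_fst_char hm1u h2 ht with ⟨e2, hA2⟩|⟨e2, hA2⟩|⟨e2, hA2⟩|⟨e2, hA2⟩|⟨e2, hA2⟩ <;>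
    first
      | omega
      | exact apply1_det hA1 hA2
      | exact apply3_det hA1 hA2
      | exact apply9_det hA1 hA2

lemma vmatch_snd_det {k m0 m1 t : ℕ} (hk1 : 1 ≤ k) (hkn : k + 1 ≤ n) (hm1u : m1 + 1 ≤ k)
    {p p' S : FSeq n} (ht : OfType k m0 m1 t S) (h1 : Vmatch k m0 m1 p S)
    (h2 : Vmatch k m0 m1 p' S) : p = p' := by
  rcases vmatch_snd_char hk1 hkn hm1u h1 ht with ⟨e1, hA1⟩|⟨e1, hA1⟩|⟨e1, hA1⟩|⟨e1, hA1⟩|⟨e1, hA1⟩ <;>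
  rcases vmatch_snd_char hk1 hkn hm1u h2 ht with ⟨e2, hA2⟩|⟨e2, hA2⟩|⟨e2, hA2⟩|⟨e2, hA2⟩|⟨e2, hA2⟩ <;>
    first
      | omega
      | exact apply2_det hA1 hA2
      | exact apply4_det hA1 hA2
      | exact apply10_det hA1 hA2

lemma uniq_odd {k m0 m1 t : ℕ} (hk1 : 1 ≤ k) (hkn : k + 1 ≤ n) (hm1u : m1 + 1 ≤ k)
    {S S' : FSeq n} (hv : S ≠ v0seq n k) (ht : OfType k m0 m1 t S)
    (hodd : t = 1 ∨ t = 3 ∨ t = 5 ∨ t = 7 ∨ t = 9)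
    (hcan : Vmatch k m0 m1 S S') :
    ∀ pq : Option (FSeq n) × Option (FSeq n),
      VmatchE n k m0 m1 pq.1 pq.2 ∧ (some S = pq.1 ∨ some S = pq.2) →
      pq = (some S, some S') := by
  rintro ⟨p, q⟩ ⟨hVE, hmem⟩
  rcases q with _ | q0
  · rcases p with _ | T <;> exact hVE.elim
  rcases p with _ | T
  · have hq0 : q0 = v0seq n k := hVE
    rcases hmem with hm | hm
    · simp at hm
    · exact absurd (by rw [Option.some.inj hm, hq0]) hv
  · rcases hmem with hm | hm
    · have hT : T = S := (Option.some.inj hm).symm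
      subst hT
      rw [vmatch_fst_det hm1u ht hVE hcan]
    · have hq0 : q0 = S := (Option.some.inj hm).symm
      subst hq0
      rcases vmatch_snd_char hk1 hkn hm1u hVE ht with ⟨he, _⟩|⟨he, _⟩|⟨he, _⟩|⟨he, _⟩|⟨he, _⟩ <;>
        omega

lemma uniq_even {k m0 m1 t : ℕ} (hk1 : 1 ≤ k) (hkn : k + 1 ≤ n) (hm1u : m1 + 1 ≤ k)
    {T S : FSeq n} (hv : S ≠ v0seq n k) (ht : OfType k m0 m1 t S)
    (heven : t = 2 ∨ t = 4 ∨ t = 6 ∨ t = 8 ∨ t = 10)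
    (hcan : Vmatch k m0 m1 T S) :
    ∀ pq : Option (FSeq n) × Option (FSeq n),
      VmatchE n k m0 m1 pq.1 pq.2 ∧ (some S = pq.1 ∨ some S = pq.2) →
      pq = (some T, some S) := by
  rintro ⟨p, q⟩ ⟨hVE, hmem⟩
  rcases q with _ | q0
  · rcases p with _ | T' <;> exact hVE.elim
  rcases p with _ | T'
  · have hq0 : q0 = v0seq n k := hVE
    rcases hmem with hm | hm
    · simp at hm
    · exact absurd (by rw [Option.some.inj hm, hq0]) hv
  · rcases hmem with hm | hm
    · have hT' : T' = S := (Option.some.inj hm).symm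
      subst hT'
      exfalso
      rcases vmatch_fst_char hm1u hVE ht with ⟨he, _⟩|⟨he, _⟩|⟨he, _⟩|⟨he, _⟩|⟨he, _⟩ <;>
        omega
    · have hq0 : q0 = S := (Option.some.inj hm).symm
      subst hq0
      rw [vmatch_snd_det hk1 hkn hm1u ht hVE hcan]

lemma classify_or {k m0 m1 : ℕ} {S : FSeq n} (hm1u : m1 + 1 ≤ k)
    (hF : FaceSeq k S) (hne : S ≠ v0seq n k) :
    Type1 k m0 m1 S ∨ Type2 k m0 m1 S ∨ Type3 k S ∨ Type4 k S ∨ Type5 m0 m1 S ∨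
    Type6 m0 m1 S ∨ Type7 m0 m1 S ∨ Type8 m0 m1 S ∨ Type9 k S ∨ Type10 k S := by
  have h := classify (m0 := m0) (m1 := m1) hm1u hF hne
  rcases hv : typeOf k m0 m1 S with _|_|_|_|_|_|_|_|_|_|_|t <;> rw [hv] at h
  · exact h.elim
  · exact Or.inl h
  · exact Or.inr (Or.inl h)
  · exact Or.inr (Or.inr (Or.inl h))
  · exact Or.inr (Or.inr (Or.inr (Or.inl h)))
  · exact Or.inr (Or.inr (Or.inr (Or.inr (Or.inl h))))
  · exact Or.inr (Or.inr (Or.inr (Or.inr (Or.inr (Or.inl h)))))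
  · exact Or.inr (Or.inr (Or.inr (Or.inr (Or.inr (Or.inr (Or.inl h))))))
  · exact Or.inr (Or.inr (Or.inr (Or.inr (Or.inr (Or.inr (Or.inr (Or.inl h)))))))
  · exact Or.inr (Or.inr (Or.inr (Or.inr (Or.inr (Or.inr (Or.inr (Or.inr (Or.inl h))))))))
  · exact Or.inr (Or.inr (Or.inr (Or.inr (Or.inr (Or.inr (Or.inr (Or.inr (Or.inr h))))))))
  · exact h.elim

end AuxM









end AuxMatching
/-- Every face sequence (and the empty face) appears in exactly one pair
of the matching `V`, and in every pair `(S, S')` of `V` the face `S` is a codimension-1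
face of `S'`; hence `V` is a complete matching. -/
theorem matching_complete (n k m0 m1 : ℕ) (hk1 : 1 ≤ k) (hk2 : k ≤ n - 1)
    (hm0 : m0 + k + 1 ≤ n) (hm1l : 1 ≤ m1) (hm1u : m1 + 1 ≤ k) :
    (∀ c : Option (FSeq n), (∀ S, c = some S → FaceSeq k S) →
      ∃! pq : Option (FSeq n) × Option (FSeq n),
        VmatchE n k m0 m1 pq.1 pq.2 ∧ (c = pq.1 ∨ c = pq.2)) ∧
    (∀ S S' : FSeq n, Vmatch k m0 m1 S S' → Codim1 k S S') := by
  have hkn : k + 1 ≤ n := by omega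
  constructor
  · intro c hc
    rcases c with _ | S
    · -- the empty face
      refine ⟨(none, some (v0seq n k)), ⟨rfl, Or.inl rfl⟩, ?_⟩
      rintro ⟨p, q⟩ ⟨hVE, hmem⟩
      rcases q with _ | S'
      · rcases p with _ | T <;> exact hVE.elim
      rcases p with _ | T
      · have h' : S' = v0seq n k := hVE
        subst h'
        rfl
      · rcases hmem with h | h <;> simp at h
    · have hFS : FaceSeq k S := hc S rfl
      by_cases hv : S = v0seq n k
      · -- S = v₀, matched with the empty face
        refine ⟨(none, some S), ⟨hv, Or.inr rfl⟩, ?_⟩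
        rintro ⟨p, q⟩ ⟨hVE, hmem⟩
        rcases q with _ | S'
        · rcases p with _ | T <;> exact hVE.elim
        rcases p with _ | T
        · have h' : S' = v0seq n k := hVE
          rcases hmem with h | h
          · simp at h
          · rw [← hv] at h'
            rw [← h']
        · exfalso
          have hstar := AuxM.vmatch_snd_hasStar hVE
          rcases hmem with h | h
          · have hT : T = S := (Option.some.inj h).symm
            subst hT
            rcases AuxM.vmatch_fst_cases hVE with hs | ht9
            · rw [hv] at hs
              exact AuxM.v0_starless hs
            · exact ht9.2.2 hv
          · have hS' : S' = S := (Option.some.inj h).symm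
            subst hS'
            rw [hv] at hstar
            exact AuxM.v0_starless hstar
      · rcases AuxM.classify_or hm1u hFS hv with h | h | h | h | h | h | h | h | h | h
        · -- type 1
          have ht : OfType k m0 m1 1 S := h
          have hO : OneRight S := by
            rcases h with ⟨_, hO, _⟩ | ⟨_, hO, _⟩ | ⟨_, hO, _⟩ <;> exact hO
          obtain ⟨io, hio⟩ := AuxM.exists_rightmostOne ⟨hO.2.choose, hO.2.choose_spec.1⟩
          have hcan : Vmatch k m0 m1 S (Function.update S io Letter.star) :=
            ⟨hFS, Or.inl ⟨h, io, hio, rfl⟩⟩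
          exact ⟨(some S, some (Function.update S io Letter.star)), ⟨hcan, Or.inl rfl⟩,
            fun pq hpq => AuxM.uniq_odd hk1 hkn hm1u hv ht (Or.inl rfl) hcan pq hpq⟩
        · -- type 2
          have ht : OfType k m0 m1 2 S := h
          obtain ⟨T, hTF, hT1, hA1, hA2⟩ := AuxM.bwd2 hFS h
          have hcan : Vmatch k m0 m1 T S := ⟨hTF, Or.inl ⟨hT1, hA1⟩⟩
          exact ⟨(some T, some S), ⟨hcan, Or.inr rfl⟩,
            fun pq hpq => AuxM.uniq_even hk1 hkn hm1u hv ht (Or.inl rfl) hcan pq hpq⟩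
        · -- type 3
          have ht : OfType k m0 m1 3 S := h
          obtain ⟨io, hio⟩ := AuxM.exists_leftmostZero
            ⟨h.2.2.2.2.choose, h.2.2.2.2.choose_spec.1⟩
          have hcan : Vmatch k m0 m1 S (Function.update S io Letter.star) :=
            ⟨hFS, Or.inr (Or.inl ⟨h, io, hio, rfl⟩)⟩
          exact ⟨(some S, some (Function.update S io Letter.star)), ⟨hcan, Or.inl rfl⟩,
            fun pq hpq => AuxM.uniq_odd hk1 hkn hm1u hv ht (Or.inr (Or.inl rfl)) hcan pq hpq⟩
        · -- type 4
          have ht : OfType k m0 m1 4 S := h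
          obtain ⟨T, hTF, hT3, hA3, hA4⟩ := AuxM.bwd4 hFS h
          have hcan : Vmatch k m0 m1 T S := ⟨hTF, Or.inr (Or.inl ⟨hT3, hA3⟩)⟩
          exact ⟨(some T, some S), ⟨hcan, Or.inr rfl⟩,
            fun pq hpq => AuxM.uniq_even hk1 hkn hm1u hv ht (Or.inr (Or.inl rfl)) hcan pq hpq⟩
        · -- type 5
          have ht : OfType k m0 m1 5 S := h
          obtain ⟨io, hio⟩ := AuxM.exists_leftmostZero
            ⟨h.2.2.2.2.choose, h.2.2.2.2.choose_spec.1⟩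
          have hcan : Vmatch k m0 m1 S (Function.update S io Letter.star) :=
            ⟨hFS, Or.inr (Or.inr (Or.inl ⟨h, io, hio, rfl⟩))⟩
          exact ⟨(some S, some (Function.update S io Letter.star)), ⟨hcan, Or.inl rfl⟩,
            fun pq hpq => AuxM.uniq_odd hk1 hkn hm1u hv ht
              (Or.inr (Or.inr (Or.inl rfl))) hcan pq hpq⟩
        · -- type 6
          have ht : OfType k m0 m1 6 S := h
          obtain ⟨T, hTF, hT5, hA3, hA4⟩ := AuxM.bwd6 hm0 hm1u hFS h
          have hcan : Vmatch k m0 m1 T S := ⟨hTF, Or.inr (Or.inr (Or.inl ⟨hT5, hA3⟩))⟩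
          exact ⟨(some T, some S), ⟨hcan, Or.inr rfl⟩,
            fun pq hpq => AuxM.uniq_even hk1 hkn hm1u hv ht
              (Or.inr (Or.inr (Or.inl rfl))) hcan pq hpq⟩
        · -- type 7
          have ht : OfType k m0 m1 7 S := h
          obtain ⟨io, hio⟩ := AuxM.exists_leftmostZero
            ⟨h.2.2.2.2.choose, h.2.2.2.2.choose_spec.1⟩
          have hcan : Vmatch k m0 m1 S (Function.update S io Letter.star) :=
            ⟨hFS, Or.inr (Or.inr (Or.inr (Or.inl ⟨h, io, hio, rfl⟩)))⟩
          exact ⟨(some S, some (Function.update S io Letter.star)), ⟨hcan, Or.inl rfl⟩,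
            fun pq hpq => AuxM.uniq_odd hk1 hkn hm1u hv ht
              (Or.inr (Or.inr (Or.inr (Or.inl rfl)))) hcan pq hpq⟩
        · -- type 8
          have ht : OfType k m0 m1 8 S := h
          obtain ⟨T, hTF, hT7, hA3, hA4⟩ := AuxM.bwd8 hm0 hm1u hFS h
          have hcan : Vmatch k m0 m1 T S :=
            ⟨hTF, Or.inr (Or.inr (Or.inr (Or.inl ⟨hT7, hA3⟩)))⟩
          exact ⟨(some T, some S), ⟨hcan, Or.inr rfl⟩,
            fun pq hpq => AuxM.uniq_even hk1 hkn hm1u hv ht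
              (Or.inr (Or.inr (Or.inr (Or.inl rfl)))) hcan pq hpq⟩
        · -- type 9
          have ht : OfType k m0 m1 9 S := h
          have htot := AuxM.count_total S
          have h1 := h.1
          have h0 := h.2.1
          obtain ⟨i, hi⟩ := AuxM.exists_leftmostZero
            (AuxM.exists_of_countL (a := Letter.zero) (S := S)
              (by rw [← AuxM.count0_eq]; omega))
          obtain ⟨j, hj⟩ := AuxM.exists_rightmostOne
            (AuxM.exists_of_countL (a := Letter.one) (S := S)
              (by rw [← AuxM.count1_eq]; omega))
          have hcan : Vmatch k m0 m1 S
              (Function.update (Function.update S i Letter.star) j Letter.star) :=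
            ⟨hFS, Or.inr (Or.inr (Or.inr (Or.inr ⟨h, i, j, hi, hj, rfl⟩)))⟩
          exact ⟨(some S, some (Function.update (Function.update S i Letter.star) j
              Letter.star)), ⟨hcan, Or.inl rfl⟩,
            fun pq hpq => AuxM.uniq_odd hk1 hkn hm1u hv ht
              (Or.inr (Or.inr (Or.inr (Or.inr rfl)))) hcan pq hpq⟩
        · -- type 10
          have ht : OfType k m0 m1 10 S := h
          obtain ⟨T, hTF, hT9, hA9, hA10⟩ := AuxM.bwd10 h
          have hcan : Vmatch k m0 m1 T S :=
            ⟨hTF, Or.inr (Or.inr (Or.inr (Or.inr ⟨hT9, hA9⟩)))⟩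
          exact ⟨(some T, some S), ⟨hcan, Or.inr rfl⟩,
            fun pq hpq => AuxM.uniq_even hk1 hkn hm1u hv ht
              (Or.inr (Or.inr (Or.inr (Or.inr rfl)))) hcan pq hpq⟩
  · exact fun S S' hV => AuxM.codim_of_vmatch hm1u hV
end

section
/- Let a₀, b₀, a₁ be a V-path in which a₀ = S is a face sequence of type 1, and write a₁ = S′. Then either (i) S′ is of type 1, 2, 5, 6 or 10 and S′ has a 0 at the position of the rightmost 1 of S, or (ii) S′ is of type 2, 3, 4, 7, 8 or 10, S′ has a ∗ at the position of the rightmost 1 of S, and this ∗ is the rightmost ∗ of S′. -/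
set_option linter.unusedVariables false

section Helpers

open Finset

lemma letter_cases (ℓ : Letter) : ℓ = Letter.zero ∨ ℓ = Letter.one ∨ ℓ = Letter.star := by
  cases ℓ <;> simp

lemma cnt_update {n : ℕ} (S : FSeq n) (i : Fin n) (x ℓ : Letter) :
    (Finset.univ.filter fun j => Function.update S i x j = ℓ).card
      + (if S i = ℓ then 1 else 0)
    = (Finset.univ.filter fun j => S j = ℓ).card + (if x = ℓ then 1 else 0) := by
  classical
  rw [Finset.card_filter, Finset.card_filter]
  have h1 : (fun j => if Function.update S i x j = ℓ then (1:ℕ) else 0)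
      = Function.update (fun j => if S j = ℓ then (1:ℕ) else 0) i (if x = ℓ then 1 else 0) := by
    funext j
    by_cases hj : j = i
    · subst hj; simp
    · simp [Function.update_of_ne hj]
  rw [h1, Finset.sum_update_of_mem (Finset.mem_univ i),
    Finset.sum_eq_sum_sdiff_singleton_add (Finset.mem_univ i)
      (fun j => if S j = ℓ then (1:ℕ) else 0)]
  ring

lemma count1_update {n : ℕ} (S : FSeq n) (i : Fin n) (x : Letter) :
    count1 (Function.update S i x) + (if S i = Letter.one then 1 else 0)
      = count1 S + (if x = Letter.one then 1 else 0) := cnt_update S i x Letter.one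

lemma count0_update {n : ℕ} (S : FSeq n) (i : Fin n) (x : Letter) :
    count0 (Function.update S i x) + (if S i = Letter.zero then 1 else 0)
      = count0 S + (if x = Letter.zero then 1 else 0) := cnt_update S i x Letter.zero

lemma countStar_update {n : ℕ} (S : FSeq n) (i : Fin n) (x : Letter) :
    countStar (Function.update S i x) + (if S i = Letter.star then 1 else 0)
      = countStar S + (if x = Letter.star then 1 else 0) := cnt_update S i x Letter.star

lemma cnt_total {n : ℕ} (S : FSeq n) : count0 S + count1 S + countStar S = n := by
  classical
  unfold count0 count1 countStar
  rw [Finset.card_filter, Finset.card_filter, Finset.card_filter,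
    ← Finset.sum_add_distrib, ← Finset.sum_add_distrib]
  have h : ∀ j : Fin n, (((if S j = Letter.zero then (1:ℕ) else 0)
      + (if S j = Letter.one then 1 else 0)) + (if S j = Letter.star then 1 else 0)) = 1 := by
    intro j; cases h : S j <;> simp
  rw [Finset.sum_congr rfl fun j _ => h j]
  simp

lemma hasStar_iff {n : ℕ} (S : FSeq n) : hasStar S ↔ countStar S ≠ 0 := by
  constructor
  · rintro ⟨q, hq⟩
    exact Finset.card_ne_zero_of_mem (Finset.mem_filter.2 ⟨Finset.mem_univ q, hq⟩)
  · intro h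
    obtain ⟨q, hq⟩ := Finset.card_ne_zero.1 h
    exact ⟨q, (Finset.mem_filter.1 hq).2⟩

lemma not_one_and_noOne {n : ℕ} {S : FSeq n} (h1 : OneRight S) (h2 : NoOneRight S) : False := by
  obtain ⟨_, z, hz, hzr⟩ := h1
  obtain ⟨j, hj, hjs⟩ := h2.2 z hz
  exact hzr j hj hjs

lemma not_zero_and_noZero {n : ℕ} {S : FSeq n} (h1 : ZeroLeft S) (h2 : NoZeroLeft S) : False := by
  obtain ⟨_, z, hz, hzl⟩ := h1
  obtain ⟨j, hj, hjs⟩ := h2.2 z hz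
  exact hzl j hj hjs

lemma zeroLeft_or_noZeroLeft {n : ℕ} (S : FSeq n) (h : hasStar S) :
    ZeroLeft S ∨ NoZeroLeft S := by
  classical
  obtain ⟨q0, hq0⟩ := h
  have hne : (Finset.univ.filter fun j => S j = Letter.star).Nonempty :=
    ⟨q0, Finset.mem_filter.2 ⟨Finset.mem_univ _, hq0⟩⟩
  set m := (Finset.univ.filter fun j => S j = Letter.star).min' hne with hm
  have hmstar : S m = Letter.star :=
    (Finset.mem_filter.1 ((Finset.univ.filter fun j => S j = Letter.star).min'_mem hne)).2
  have hmin : ∀ j, S j = Letter.star → m ≤ j := fun j hj =>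
    Finset.min'_le _ j (Finset.mem_filter.2 ⟨Finset.mem_univ _, hj⟩)
  by_cases hz : ∃ z, S z = Letter.zero ∧ z < m
  · obtain ⟨z, hz0, hzm⟩ := hz
    exact Or.inl ⟨⟨q0, hq0⟩, z, hz0, fun j hj hjs => absurd (hmin j hjs) (by
      exact not_le.2 (hj.trans hzm))⟩
  · push_neg at hz
    refine Or.inr ⟨⟨q0, hq0⟩, fun i hi => ⟨m, ?_, hmstar⟩⟩
    have h1 : m ≤ i := hz i hi
    have h2 : i ≠ m := fun hc => by rw [hc, hmstar] at hi; exact Letter.noConfusion hi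
    exact lt_of_le_of_ne h1 (Ne.symm h2)

lemma oneRight_or_noOneRight {n : ℕ} (S : FSeq n) (h : hasStar S) :
    OneRight S ∨ NoOneRight S := by
  classical
  obtain ⟨q0, hq0⟩ := h
  have hne : (Finset.univ.filter fun j => S j = Letter.star).Nonempty :=
    ⟨q0, Finset.mem_filter.2 ⟨Finset.mem_univ _, hq0⟩⟩
  set m := (Finset.univ.filter fun j => S j = Letter.star).max' hne with hm
  have hmstar : S m = Letter.star :=
    (Finset.mem_filter.1 ((Finset.univ.filter fun j => S j = Letter.star).max'_mem hne)).2
  have hmax : ∀ j, S j = Letter.star → j ≤ m := fun j hj =>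
    Finset.le_max' _ j (Finset.mem_filter.2 ⟨Finset.mem_univ _, hj⟩)
  by_cases hz : ∃ z, S z = Letter.one ∧ m < z
  · obtain ⟨z, hz1, hmz⟩ := hz
    exact Or.inl ⟨⟨q0, hq0⟩, z, hz1, fun j hj hjs => absurd (hmax j hjs) (by
      exact not_le.2 (hmz.trans hj))⟩
  · push_neg at hz
    refine Or.inr ⟨⟨q0, hq0⟩, fun i hi => ⟨m, ?_, hmstar⟩⟩
    have h1 : i ≤ m := hz i hi
    have h2 : i ≠ m := fun hc => by rw [hc, hmstar] at hi; exact Letter.noConfusion hi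
    exact lt_of_le_of_ne h1 h2

lemma exists_vertex {n k : ℕ} (T : FSeq n) (hc1 : count1 T + 1 ≤ k)
    (hcs : k + 1 ≤ count1 T + countStar T) {q : Fin n} (hq : T q = Letter.star)
    (y : Letter) (hy : y ≠ Letter.star) :
    ∃ v, v ∈ VertexSet k T ∧ v q = y := by
  classical
  set St := Finset.univ.filter fun j => T j = Letter.star with hSt
  have hqSt : q ∈ St := Finset.mem_filter.2 ⟨Finset.mem_univ _, hq⟩
  have hStcard : St.card = countStar T := rfl
  have key : ∀ B : Finset (Fin n), B ⊆ St → B.card + count1 T = k →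
      (fun j => if j ∈ B then Letter.one else if T j = Letter.star then Letter.zero else T j)
        ∈ VertexSet k T := by
    intro B hBsub hBcard
    refine ⟨?_, ?_, ?_⟩
    · intro j
      by_cases hj : j ∈ B
      · simp [hj]
      · by_cases hjs : T j = Letter.star
        · simp [hj, hjs]
        · simpa [hj, hjs] using hjs
    · show (Finset.univ.filter fun j =>
          (if j ∈ B then Letter.one else if T j = Letter.star then Letter.zero else T j)
            = Letter.one).card = k
      have hset : (Finset.univ.filter fun j =>
          (if j ∈ B then Letter.one else if T j = Letter.star then Letter.zero else T j)
            = Letter.one) = B ∪ (Finset.univ.filter fun j => T j = Letter.one) := by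
        ext j
        simp only [Finset.mem_filter, Finset.mem_univ, true_and, Finset.mem_union]
        by_cases hj : j ∈ B
        · simp [hj]
        · by_cases hjs : T j = Letter.star
          · simp [hj, hjs]
          · simp [hj, hjs]
      rw [hset, Finset.card_union_of_disjoint]
      · exact hBcard
      · rw [Finset.disjoint_left]
        intro j hjB hj1
        have := (Finset.mem_filter.1 (hBsub hjB)).2
        rw [(Finset.mem_filter.1 hj1).2] at this
        exact Letter.noConfusion this
    · intro j hjs
      have hj : j ∉ B := fun hc => hjs (Finset.mem_filter.1 (hBsub hc)).2
      simp [hj, hjs]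
  rcases letter_cases y with hy0 | hy1 | hys
  · -- y = zero : pick B ⊆ St.erase q
    have hcard : k - count1 T ≤ (St.erase q).card := by
      rw [Finset.card_erase_of_mem hqSt, hStcard]
      omega
    obtain ⟨B, hBsub, hBcard⟩ := Finset.exists_subset_card_eq hcard
    have hqB : q ∉ B := fun hc => (Finset.mem_erase.1 (hBsub hc)).1 rfl
    refine ⟨_, key B (hBsub.trans (Finset.erase_subset _ _)) (by omega), ?_⟩
    simp [hqB, hq, hy0]
  · -- y = one : B = insert q B'
    have hcard : k - count1 T - 1 ≤ (St.erase q).card := by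
      rw [Finset.card_erase_of_mem hqSt, hStcard]
      omega
    obtain ⟨B', hBsub, hBcard⟩ := Finset.exists_subset_card_eq hcard
    have hqB : q ∉ B' := fun hc => (Finset.mem_erase.1 (hBsub hc)).1 rfl
    have hsub : insert q B' ⊆ St :=
      Finset.insert_subset hqSt (hBsub.trans (Finset.erase_subset _ _))
    have hcard2 : (insert q B').card + count1 T = k := by
      rw [Finset.card_insert_of_notMem hqB]
      omega
    refine ⟨_, key (insert q B') hsub hcard2, ?_⟩
    simp [hy1]
  · exact absurd hys hy

lemma subset_char {n k : ℕ} (b T : FSeq n) (hT1 : count1 T + 1 ≤ k)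
    (hTs : k + 1 ≤ count1 T + countStar T) (hstar : countStar T ≠ 0)
    (hsub : VertexSet k T ⊆ VertexSet k b) :
    (∀ q, T q = Letter.star → b q = Letter.star) ∧
    (∀ q, T q ≠ Letter.star → b q ≠ Letter.star → T q = b q) := by
  classical
  constructor
  · intro q hq
    by_contra hbq
    obtain ⟨v1, hv1, hv1q⟩ := exists_vertex T hT1 hTs hq Letter.one (by simp)
    obtain ⟨v0, hv0, hv0q⟩ := exists_vertex T hT1 hTs hq Letter.zero (by simp)
    have h1 := (hsub hv1).2.2 q hbq
    have h0 := (hsub hv0).2.2 q hbq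
    rw [hv1q] at h1; rw [hv0q] at h0
    rw [← h1] at h0
    exact Letter.noConfusion h0
  · intro q hq hbq
    obtain ⟨r, hr⟩ := (hasStar_iff T).2 hstar
    obtain ⟨v, hv, _⟩ := exists_vertex T hT1 hTs hr Letter.zero (by simp)
    have h1 := hv.2.2 q hq
    have h2 := (hsub hv).2.2 q hbq
    rw [← h1, ← h2]

end Helpers

/-- In a `V`-path `a₀, b₀, a₁` with `a₀` of type 1, either `a₁` is of
type 1, 2, 5, 6 or 10 and has a `0` at the position of the rightmost `1` of `a₀`, or `a₁`
is of type 2, 3, 4, 7, 8 or 10, has a `∗` at the position of the rightmost `1` of `a₀`,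
and this `∗` is the rightmost `∗` of `a₁`. -/
theorem vpath_from_type1 (n k m0 m1 : ℕ) (hk1 : 1 ≤ k) (hk2 : k ≤ n - 1)
    (hm0 : m0 + k + 1 ≤ n) (hm1l : 1 ≤ m1) (hm1u : m1 + 1 ≤ k)
    (P : VPath n k m0 m1 0) (h0 : Type1 k m0 m1 (P.a 0)) :
    ((Type1 k m0 m1 (P.a 1) ∨ Type2 k m0 m1 (P.a 1) ∨ Type5 m0 m1 (P.a 1) ∨
        Type6 m0 m1 (P.a 1) ∨ Type10 k (P.a 1)) ∧
      ∃ i, IsRightmostOne (P.a 0) i ∧ P.a 1 i = Letter.zero) ∨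
    ((Type2 k m0 m1 (P.a 1) ∨ Type3 k (P.a 1) ∨ Type4 k (P.a 1) ∨ Type7 m0 m1 (P.a 1) ∨
        Type8 m0 m1 (P.a 1) ∨ Type10 k (P.a 1)) ∧
      ∃ i, IsRightmostOne (P.a 0) i ∧ P.a 1 i = Letter.star ∧ IsRightmostStar (P.a 1) i) := by
  classical
  have hmem : Vmatch k m0 m1 (P.a 0) (P.b 0) := P.mem 0
  have hcod : Codim1 k (P.a 1) (P.b 0) := P.codim_right 0
  have hne : P.a 0 ≠ P.a 1 := P.step_ne 0
  obtain ⟨hfaceS, hbr⟩ := hmem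
  obtain ⟨hc1k, hOR⟩ : count1 (P.a 0) + 1 ≤ k ∧ OneRight (P.a 0) := by
    rcases h0 with h | h | h <;> exact ⟨h.1, h.2.1⟩
  -- the matched rule must be rule 1
  have hap : Apply1 (P.a 0) (P.b 0) := by
    rcases hbr with ⟨_, h⟩ | ⟨h3, _⟩ | ⟨h5, _⟩ | ⟨h7, _⟩ | ⟨h9, _⟩
    · exact h
    · exact absurd (not_one_and_noOne hOR h3.2.2.1) not_false
    · exfalso
      obtain ⟨h5a, h5b, _, h5d⟩ := h5
      rcases h0 with ⟨_, _, hx⟩ | ⟨_, _, _, hx⟩ | ⟨_, _, _, hx, hnz⟩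
      · exact hx h5a
      · omega
      · exact not_zero_and_noZero h5d hnz
    · exact absurd (not_one_and_noOne hOR h7.2.2.1) not_false
    · exact absurd h9.1 (by omega)
  obtain ⟨i, hri, hbdef⟩ := hap
  have hS1 : P.a 0 i = Letter.one := hri.1
  have hsS : countStar (P.a 0) ≠ 0 := (hasStar_iff _).1 hOR.1
  have hfS : count1 (P.a 0) + 1 ≤ k ∧ k + 1 ≤ count1 (P.a 0) + countStar (P.a 0) := by
    rcases hfaceS with ⟨h, _⟩ | h
    · exact absurd h hsS
    · exact h
  have hstar_lt : ∀ q, P.a 0 q = Letter.star → q < i := by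
    obtain ⟨_, z, hz1, hzr⟩ := hOR
    have hzi : z ≤ i := by
      by_contra h
      push_neg at h
      exact (hri.2 z h) hz1
    intro q hq
    by_contra h
    push_neg at h
    rcases lt_or_eq_of_le h with h' | h'
    · exact hzr q (lt_of_le_of_lt hzi h') hq
    · rw [← h'] at hq
      rw [hS1] at hq
      exact Letter.noConfusion hq
  -- counts of b₀
  have hb1 : count1 (P.b 0) + 1 = count1 (P.a 0) := by
    have h := count1_update (P.a 0) i Letter.star
    rw [hS1] at h
    simp only [if_pos rfl] at h
    rw [← hbdef] at h
    simpa using h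
  have hb0 : count0 (P.b 0) = count0 (P.a 0) := by
    have h := count0_update (P.a 0) i Letter.star
    rw [hS1] at h
    rw [← hbdef] at h
    simpa using h
  have hbs : countStar (P.b 0) = countStar (P.a 0) + 1 := by
    have h := countStar_update (P.a 0) i Letter.star
    rw [hS1] at h
    rw [← hbdef] at h
    simpa using h
  obtain ⟨hssub, hdim⟩ := hcod
  have hs2 : 2 ≤ countStar (P.a 0) := by omega
  have hfbdim : fdim (P.b 0) = countStar (P.a 0) := by
    unfold fdim
    rw [hbs, if_neg (by omega)]
    omega
  have hAsne : countStar (P.a 1) ≠ 0 := by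
    intro hc
    rw [hfbdim] at hdim
    unfold fdim at hdim
    rw [if_pos hc] at hdim
    omega
  have hAs : countStar (P.a 1) = countStar (P.a 0) := by
    rw [hfbdim] at hdim
    unfold fdim at hdim
    rw [if_neg hAsne] at hdim
    omega
  have hfA : count1 (P.a 1) + 1 ≤ k ∧ k + 1 ≤ count1 (P.a 1) + countStar (P.a 1) := by
    rcases P.face_a 1 with ⟨h, _⟩ | h
    · exact absurd h hAsne
    · exact h
  obtain ⟨hch1, hch2⟩ := subset_char (P.b 0) (P.a 1) hfA.1 hfA.2 hAsne hssub.subset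
  -- the difference set has exactly one element p
  set D := Finset.univ.filter (fun q => P.b 0 q = Letter.star ∧ ¬ P.a 1 q = Letter.star)
    with hD
  have hpart : (Finset.univ.filter fun q => P.b 0 q = Letter.star)
      = (Finset.univ.filter fun q => P.a 1 q = Letter.star) ∪ D := by
    ext q
    simp only [Finset.mem_filter, Finset.mem_union, Finset.mem_univ, true_and, hD]
    constructor
    · intro hbq
      by_cases hAq : P.a 1 q = Letter.star
      · exact Or.inl hAq
      · exact Or.inr ⟨hbq, hAq⟩
    · rintro (hAq | ⟨hbq, _⟩)
      · exact hch1 q hAq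
      · exact hbq
  have hdisj : Disjoint (Finset.univ.filter fun q => P.a 1 q = Letter.star) D := by
    rw [Finset.disjoint_left]
    intro q hq hqD
    rw [hD, Finset.mem_filter] at hqD
    exact hqD.2.2 (Finset.mem_filter.1 hq).2
  have hDcard : D.card = 1 := by
    have hcc := congrArg Finset.card hpart
    rw [Finset.card_union_of_disjoint hdisj] at hcc
    have e1 : (Finset.univ.filter fun q => P.b 0 q = Letter.star).card = countStar (P.b 0) := rfl
    have e2 : (Finset.univ.filter fun q => P.a 1 q = Letter.star).card = countStar (P.a 1) := rfl
    rw [e1, e2] at hcc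
    omega
  obtain ⟨p, hp⟩ := Finset.card_eq_one.1 hDcard
  have hpD : p ∈ D := hp ▸ Finset.mem_singleton_self p
  rw [hD, Finset.mem_filter] at hpD
  have hbp : P.b 0 p = Letter.star := hpD.2.1
  have hAp : P.a 1 p ≠ Letter.star := hpD.2.2
  have heq : ∀ q, q ≠ p → P.a 1 q = P.b 0 q := by
    intro q hq
    by_cases hAq : P.a 1 q = Letter.star
    · rw [hAq, hch1 q hAq]
    · by_cases hbq : P.b 0 q = Letter.star
      · exfalso
        have : q ∈ D := by
          rw [hD, Finset.mem_filter]
          exact ⟨Finset.mem_univ _, hbq, hAq⟩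
        rw [hp, Finset.mem_singleton] at this
        exact hq this
      · exact hch2 q hAq hbq
  have hAupd : P.a 1 = Function.update (P.b 0) p (P.a 1 p) := by
    funext q
    by_cases hq : q = p
    · subst hq; simp
    · rw [Function.update_of_ne hq]
      exact heq q hq
  have hA1c : count1 (P.a 1) = count1 (P.b 0) + (if P.a 1 p = Letter.one then 1 else 0) := by
    have h := count1_update (P.b 0) p (P.a 1 p)
    rw [hbp, ← hAupd] at h
    simpa using h
  have hA0c : count0 (P.a 1) = count0 (P.b 0) + (if P.a 1 p = Letter.zero then 1 else 0) := by
    have h := count0_update (P.b 0) p (P.a 1 p)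
    rw [hbp, ← hAupd] at h
    simpa using h
  have hbupd : ∀ q, q ≠ i → P.b 0 q = P.a 0 q := by
    intro q hq
    rw [hbdef, Function.update_of_ne hq]
  have hbi : P.b 0 i = Letter.star := by rw [hbdef]; simp
  by_cases hpi : p = i
  · -- Case A : the modified star is at position i
    subst hpi
    have hApz : P.a 1 p = Letter.zero := by
      rcases letter_cases (P.a 1 p) with h | h | h
      · exact h
      · exfalso
        apply hne
        funext q
        by_cases hq : q = p
        · subst hq; rw [h, hS1]
        · rw [heq q hq, hbupd q hq]
      · exact absurd h hAp
    have hc1A : count1 (P.a 1) = count1 (P.b 0) := by rw [hA1c, hApz]; simp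
    have hc0A : count0 (P.a 1) = count0 (P.b 0) + 1 := by rw [hA0c, hApz]; simp
    have hstarA : hasStar (P.a 1) := (hasStar_iff _).2 hAsne
    refine Or.inl ⟨?_, p, hri, hApz⟩
    rcases oneRight_or_noOneRight (P.a 1) hstarA with hORA | hNORA
    · by_cases h1 : count1 (P.a 1) = m1
      · by_cases h2 : m0 < count0 (P.a 1)
        · exact Or.inl (Or.inr (Or.inl ⟨hfA.1, hORA, h1, h2⟩))
        · push_neg at h2
          rcases zeroLeft_or_noZeroLeft (P.a 1) hstarA with hZL | hNZL
          · exact Or.inr (Or.inr (Or.inl ⟨h1, h2, hORA, hZL⟩))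
          · by_cases h3 : count0 (P.a 1) = m0
            · exact Or.inl (Or.inr (Or.inr ⟨hfA.1, hORA, h1, h3, hNZL⟩))
            · exact Or.inr (Or.inr (Or.inr (Or.inl ⟨h1, lt_of_le_of_ne h2 h3, hORA, hNZL⟩)))
      · exact Or.inl (Or.inl ⟨hfA.1, hORA, h1⟩)
    · have hle2 : count1 (P.a 1) + 2 ≤ k := by omega
      by_cases h1 : count1 (P.a 1) + 1 = m1
      · have hm : m0 < count0 (P.a 1) := by
          rcases h0 with ⟨_, _, hx⟩ | ⟨_, _, _, hx⟩ | ⟨_, _, _, hx, _⟩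
          · exact absurd (by omega : count1 (P.a 0) = m1) hx
          · omega
          · omega
        exact Or.inr (Or.inl (Or.inr (Or.inl ⟨hle2, hNORA, h1, hm⟩)))
      · exact Or.inr (Or.inl (Or.inl ⟨hle2, hNORA, h1⟩))
  · -- Case B : the star at i survives in a₁
    have hSp : P.a 0 p = Letter.star := by rw [← hbupd p hpi]; exact hbp
    have hplt : p < i := hstar_lt p hSp
    have hAi : P.a 1 i = Letter.star := by
      rw [heq i (fun hc => hpi hc.symm), hbi]
    have hone_lt : ∀ q, P.a 1 q = Letter.one → q < i := by
      intro q hq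
      rcases lt_trichotomy q i with h | h | h
      · exact h
      · exfalso; rw [h, hAi] at hq; exact Letter.noConfusion hq
      · exfalso
        have hqp : q ≠ p := (hplt.trans h).ne'
        rw [heq q hqp, hbupd q h.ne'] at hq
        exact hri.2 q h hq
    have hNORA : NoOneRight (P.a 1) := ⟨⟨i, hAi⟩, fun q hq => ⟨i, hone_lt q hq, hAi⟩⟩
    have hrs : IsRightmostStar (P.a 1) i := by
      refine ⟨hAi, fun q hq => ?_⟩
      have hqp : q ≠ p := (hplt.trans hq).ne'
      rw [heq q hqp, hbupd q hq.ne']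
      intro hqs
      exact absurd (hstar_lt q hqs) (lt_asymm hq)
    have hstarA : hasStar (P.a 1) := ⟨i, hAi⟩
    refine Or.inr ⟨?_, i, hri, hAi, hrs⟩
    by_cases hcc : count1 (P.a 1) + 2 ≤ k
    · by_cases h1 : count1 (P.a 1) + 1 = m1
      · by_cases h2 : m0 < count0 (P.a 1)
        · exact Or.inl (Or.inr (Or.inl ⟨hcc, hNORA, h1, h2⟩))
        · push_neg at h2
          rcases zeroLeft_or_noZeroLeft (P.a 1) hstarA with hZL | hNZL
          · exact Or.inr (Or.inr (Or.inr (Or.inl ⟨h1, h2, hNORA, hZL⟩)))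
          · by_cases h3 : count0 (P.a 1) = m0
            · exact Or.inl (Or.inr (Or.inr ⟨hcc, hNORA, h1, h3, hNZL⟩))
            · exact Or.inr (Or.inr (Or.inr (Or.inr (Or.inl
                ⟨h1, lt_of_le_of_ne h2 h3, hNORA, hNZL⟩))))
      · exact Or.inl (Or.inl ⟨hcc, hNORA, h1⟩)
    · have hk1' : count1 (P.a 1) + 1 = k := by omega
      have htot := cnt_total (P.a 1)
      rcases zeroLeft_or_noZeroLeft (P.a 1) hstarA with hZL | hNZL
      · exact Or.inr (Or.inl ⟨hk1', by omega, hNORA, hZL⟩)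
      · by_cases hs : countStar (P.a 1) = 2
        · exact Or.inr (Or.inr (Or.inr (Or.inr (Or.inr ⟨hk1', by omega, hNORA, hNZL⟩))))
        · exact Or.inr (Or.inr (Or.inl ⟨hk1', by omega, hNORA, hNZL⟩))
end
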